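/- arXiv:0809.1872 — 3 statements merged into one kernel-verified Lean document; each statement's English description precedes it below -/
import Mathlib

section
/- With X as above (the lexicographic-order space of functions in ({-1} ∪ κ)^{λ⁺} with bounded support, cf(κ) ≤ λ < κ), player II has a winning strategy in the strong Choquet game on X; in particular X is a Baire space. -/
open Set Cardinal TopologicalSpace

/-- A subset `s` of a topological space is discrete (as a subspace) iff every point of `s`
has an open neighbourhood in the ambient space meeting `s` only in that point. -/
def IsDiscreteSubset {X : Type*} [TopologicalSpace X] (s : Set X) : Prop :=
  ∀ x ∈ s, ∃ U : Set X, IsOpen U ∧ U ∩ s = {x}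

/-- `dis X`: the least cardinality of a family of discrete subsets covering `X`. -/
noncomputable def dis (X : Type*) [TopologicalSpace X] : Cardinal :=
  sInf {c : Cardinal | ∃ 𝒟 : Set (Set X), #𝒟 = c ∧ (∀ D ∈ 𝒟, IsDiscreteSubset D) ∧
    ⋃₀ 𝒟 = Set.univ}

/-- `Delta X`: the dispersion character, i.e. the least cardinality of a nonempty open set. -/
noncomputable def Delta (X : Type*) [TopologicalSpace X] : Cardinal :=
  sInf {c : Cardinal | ∃ U : Set X, IsOpen U ∧ U.Nonempty ∧ #U = c}

open Ordinal

/-- The index set: the canonical well-order of order type `(λ⁺).ord`, i.e. the ordinals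
below `λ⁺`. -/
abbrev LexIdx (lam : Cardinal.{0}) : Type := (Order.succ lam).ord.ToType

/-- The underlying set of the example: functions from `λ⁺` into `W = {-1} ∪ κ` (here `⊥`
plays the role of `-1` and the ordinals `< κ.ord` play the role of the elements of `κ`,
with `0` the zero of `κ`) having bounded support, carrying the lexicographic order. -/
def LexFun (κ lam : Cardinal.{0}) : Set (Lex (LexIdx lam → WithBot Ordinal.{0})) :=
  {f | (∀ i, ofLex f i = ⊥ ∨ ∃ o : Ordinal, o < κ.ord ∧ ofLex f i = (o : WithBot Ordinal)) ∧
       ∃ γ : LexIdx lam, ∀ i, γ ≤ i → ofLex f i = ((0 : Ordinal) : WithBot Ordinal)}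

/-- The space `X` of the example. -/
def LexSpace (κ lam : Cardinal.{0}) : Type 1 := ↥(LexFun κ lam)

noncomputable instance (κ lam : Cardinal.{0}) : LinearOrder (LexSpace κ lam) :=
  inferInstanceAs (LinearOrder ↥(LexFun κ lam))

/-- `X` carries the topology induced by the lexicographic order. -/
noncomputable instance (κ lam : Cardinal.{0}) : TopologicalSpace (LexSpace κ lam) :=
  Preorder.topology _

/-- Player II has a winning strategy in the strong Choquet game on `Y`: there is a strategy
`s` (assigning to each finite sequence of moves `(Bₘ, fₘ)` of player I an open set) such that
for every play of I that is legal against `s` (i.e. `fₙ ∈ Bₙ` open and `Bₙ₊₁ ⊆ s(…,(Bₙ,fₙ))`),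
the responses of `s` are legal (`fₙ ∈ s(…) ⊆ Bₙ` open) and `⋂ₙ s(…)` is nonempty. -/
def IIWinsStrongChoquet (Y : Type*) [TopologicalSpace Y] : Prop :=
  ∃ s : ∀ n : ℕ, (Fin (n + 1) → Set Y × Y) → Set Y,
    ∀ play : ℕ → Set Y × Y,
      (∀ n, IsOpen (play n).1 ∧ (play n).2 ∈ (play n).1) →
      (∀ n, (play (n + 1)).1 ⊆ s n (fun m => play m)) →
      (∀ n, IsOpen (s n (fun m : Fin (n + 1) => play m)) ∧
            (play n).2 ∈ s n (fun m : Fin (n + 1) => play m) ∧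
            s n (fun m : Fin (n + 1) => play m) ⊆ (play n).1) ∧
      (⋂ n, s n (fun m : Fin (n + 1) => play m)).Nonempty

namespace S15

noncomputable section
open Classical

variable {κ lam : Cardinal.{0}}

local notation "o0" => ((0 : Ordinal) : WithBot Ordinal)
local notation "o1" => ((1 : Ordinal) : WithBot Ordinal)

def fn (x : LexSpace κ lam) : LexIdx lam → WithBot Ordinal := ofLex x.1

instance (κ lam : Cardinal.{0}) : OrderTopology (LexSpace κ lam) := ⟨rfl⟩

theorem lt_iff' {x y : LexSpace κ lam} :
    x < y ↔ ∃ i, (∀ j, j < i → fn x j = fn y j) ∧ fn x i < fn y i := by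
  show x.1 < y.1 ↔ _; exact Iff.rfl

theorem lt_of_agree_lt {x y : LexSpace κ lam} (i : LexIdx lam)
    (h1 : ∀ j, j < i → fn x j = fn y j) (h2 : fn x i < fn y i) : x < y :=
  lt_iff'.2 ⟨i, h1, h2⟩

theorem first_diff {x y : LexSpace κ lam} (h : x < y) (i : LexIdx lam)
    (h1 : ∀ j, j < i → fn x j = fn y j) (h2 : fn x i ≠ fn y i) : fn x i < fn y i := by
  obtain ⟨k, hk1, hk2⟩ := lt_iff'.1 h
  rcases lt_trichotomy k i with h' | rfl | h'
  · exact absurd (h1 k h') hk2.ne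
  · exact hk2
  · exact absurd (hk1 i h') h2

theorem ext_fn {x y : LexSpace κ lam} (h : ∀ i, fn x i = fn y i) : x = y := by
  apply Subtype.ext
  have : ofLex x.1 = ofLex y.1 := funext h
  simpa using congrArg toLex this

theorem exists_gt_idx (h0 : Cardinal.aleph0 ≤ lam) (a : LexIdx lam) :
    ∃ b : LexIdx lam, a < b := by
  have hlim : Order.IsSuccLimit ((Order.succ lam).ord) :=
    Cardinal.isSuccLimit_ord (h0.trans (le_of_lt (Order.lt_succ lam)))
  set e := Ordinal.ToType.mk (o := (Order.succ lam).ord) with he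
  set b := e.symm a with hb
  have hsucc : b.1 + 1 < (Order.succ lam).ord := by
    rw [Ordinal.add_one_eq_succ]; exact hlim.succ_lt b.2
  refine ⟨e ⟨b.1 + 1, hsucc⟩, ?_⟩
  have h1 : b < (⟨b.1 + 1, hsucc⟩ : Set.Iio (Order.succ lam).ord) :=
    Subtype.coe_lt_coe.1 (by simpa using lt_add_one b.1)
  have := e.lt_iff_lt.2 h1
  simpa [hb] using this

theorem idx_nonempty (h0 : Cardinal.aleph0 ≤ lam) : Nonempty (LexIdx lam) := by
  rw [Ordinal.nonempty_toType_iff, Ne, Cardinal.ord_eq_zero]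
  exact ((Cardinal.aleph0_pos.trans_le h0).trans (Order.lt_succ lam)).ne'

theorem zero_lt_kord (h0 : Cardinal.aleph0 ≤ lam) (hκ : lam < κ) : (0 : Ordinal) < κ.ord := by
  have : (0:Cardinal) < κ := (Cardinal.aleph0_pos.trans_le h0).trans hκ
  simpa using Cardinal.ord_lt_ord.2 this

theorem one_lt_kord (h0 : Cardinal.aleph0 ≤ lam) (hκ : lam < κ) : (1 : Ordinal) < κ.ord := by
  have h1 : Cardinal.aleph0 ≤ κ := h0.trans hκ.le
  have h2 : (Cardinal.aleph0).ord ≤ κ.ord := Cardinal.ord_le_ord.2 h1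
  have h3 : (1 : Ordinal) < Cardinal.aleph0.ord := by
    rw [Cardinal.ord_aleph0]; exact Ordinal.one_lt_omega0
  exact h3.trans_le h2

def bound (x : LexSpace κ lam) : LexIdx lam := Classical.choose x.2.2

theorem bound_spec (x : LexSpace κ lam) : ∀ i, bound x ≤ i → fn x i = o0 :=
  Classical.choose_spec x.2.2

def tweak (x : LexSpace κ lam) (a : LexIdx lam) (c : WithBot Ordinal) :
    Lex (LexIdx lam → WithBot Ordinal) :=
  toLex fun i => if i < a then fn x i else if i = a then c else o0

theorem tweak_mem (h0 : Cardinal.aleph0 ≤ lam) (hκ : lam < κ) (x : LexSpace κ lam)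
    (a : LexIdx lam) (c : WithBot Ordinal)
    (hc : c = ⊥ ∨ ∃ o : Ordinal, o < κ.ord ∧ c = (o : WithBot Ordinal)) :
    tweak x a c ∈ LexFun κ lam := by
  constructor
  · intro i
    rw [show ofLex (tweak x a c) i = (if i < a then fn x i else if i = a then c else o0) from rfl]
    split_ifs with h1 h2
    · exact x.2.1 i
    · rcases hc with rfl | ⟨o, ho, rfl⟩
      · exact Or.inl rfl
      · exact Or.inr ⟨o, ho, rfl⟩
    · exact Or.inr ⟨0, zero_lt_kord h0 hκ, rfl⟩
  · obtain ⟨b, hb⟩ := exists_gt_idx h0 a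
    refine ⟨b, fun i hi => ?_⟩
    have h1 : ¬ i < a := not_lt.2 ((hb.trans_le hi).le)
    have h2 : i ≠ a := (hb.trans_le hi).ne'
    rw [show ofLex (tweak x a c) i = (if i < a then fn x i else if i = a then c else o0) from rfl]
    rw [if_neg h1, if_neg h2]

def low (h0 : Cardinal.aleph0 ≤ lam) (hκ : lam < κ) (x : LexSpace κ lam) (a : LexIdx lam) :
    LexSpace κ lam :=
  ⟨tweak x a ⊥, tweak_mem h0 hκ x a ⊥ (Or.inl rfl)⟩

def high (h0 : Cardinal.aleph0 ≤ lam) (hκ : lam < κ) (x : LexSpace κ lam) (a : LexIdx lam) :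
    LexSpace κ lam :=
  ⟨tweak x a o1, tweak_mem h0 hκ x a o1 (Or.inr ⟨1, one_lt_kord h0 hκ, rfl⟩)⟩

variable (h0 : Cardinal.aleph0 ≤ lam) (hκ : lam < κ)

theorem fn_low_lt {x : LexSpace κ lam} {a j : LexIdx lam} (h : j < a) :
    fn (low h0 hκ x a) j = fn x j := if_pos h

theorem fn_low_self {x : LexSpace κ lam} {a : LexIdx lam} : fn (low h0 hκ x a) a = ⊥ := by
  show (if a < a then fn x a else if a = a then ⊥ else o0) = ⊥
  rw [if_neg (lt_irrefl a), if_pos rfl]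

theorem fn_low_gt {x : LexSpace κ lam} {a j : LexIdx lam} (h : a < j) :
    fn (low h0 hκ x a) j = o0 := by
  show (if j < a then fn x j else if j = a then ⊥ else o0) = o0
  rw [if_neg (not_lt.2 h.le), if_neg h.ne']

theorem fn_high_lt {x : LexSpace κ lam} {a j : LexIdx lam} (h : j < a) :
    fn (high h0 hκ x a) j = fn x j := if_pos h

theorem fn_high_self {x : LexSpace κ lam} {a : LexIdx lam} : fn (high h0 hκ x a) a = o1 := by
  show (if a < a then fn x a else if a = a then o1 else o0) = o1
  rw [if_neg (lt_irrefl a), if_pos rfl]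

theorem fn_high_gt {x : LexSpace κ lam} {a j : LexIdx lam} (h : a < j) :
    fn (high h0 hκ x a) j = o0 := by
  show (if j < a then fn x j else if j = a then o1 else o0) = o0
  rw [if_neg (not_lt.2 h.le), if_neg h.ne']

theorem low_lt {x : LexSpace κ lam} {a : LexIdx lam} (hs : ∀ i, a ≤ i → fn x i = o0) :
    low h0 hκ x a < x := by
  refine lt_of_agree_lt a (fun j hj => fn_low_lt h0 hκ hj) ?_
  rw [fn_low_self, hs a le_rfl]
  exact WithBot.bot_lt_coe _

theorem lt_high {x : LexSpace κ lam} {a : LexIdx lam} (hs : ∀ i, a ≤ i → fn x i = o0) :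
    x < high h0 hκ x a := by
  refine lt_of_agree_lt a (fun j hj => (fn_high_lt h0 hκ hj).symm) ?_
  rw [fn_high_self, hs a le_rfl]
  exact WithBot.coe_lt_coe.2 zero_lt_one

/-- Selection of a suitable cut point. -/
def GoodAt (p : Set (LexSpace κ lam) × LexSpace κ lam) (a : LexIdx lam) : Prop :=
  (∀ i, a ≤ i → fn p.2 i = o0) ∧
    Set.Ioo (low h0 hκ p.2 a) (high h0 hκ p.2 a) ⊆ p.1

theorem exists_good (p : Set (LexSpace κ lam) × LexSpace κ lam) (prev : LexIdx lam) :
    ∃ a, prev < a ∧ (IsOpen p.1 ∧ p.2 ∈ p.1 → GoodAt h0 hκ p a) := by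
  by_cases hleg : IsOpen p.1 ∧ p.2 ∈ p.1
  · obtain ⟨hB, hx⟩ := hleg
    have hnb : p.1 ∈ nhds p.2 := hB.mem_nhds hx
    have hl : ∃ l, l < p.2 := ⟨low h0 hκ p.2 (bound p.2), low_lt h0 hκ (bound_spec p.2)⟩
    have hu : ∃ u, p.2 < u := ⟨high h0 hκ p.2 (bound p.2), lt_high h0 hκ (bound_spec p.2)⟩
    obtain ⟨u, v, ⟨hu1, hu2⟩, hsub⟩ := (mem_nhds_iff_exists_Ioo_subset' hl hu).1 hnb
    obtain ⟨δu, hδu1, hδu2⟩ := lt_iff'.1 hu1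
    obtain ⟨δv, hδv1, hδv2⟩ := lt_iff'.1 hu2
    obtain ⟨a, ha⟩ := exists_gt_idx h0 (max (max prev (bound p.2)) (max δu δv))
    have hprev : prev < a := (le_max_of_le_left (le_max_left _ _)).trans_lt ha
    have hbd : bound p.2 < a := (le_max_of_le_left (le_max_right _ _)).trans_lt ha
    have hδua : δu < a := (le_max_of_le_right (le_max_left _ _)).trans_lt ha
    have hδva : δv < a := (le_max_of_le_right (le_max_right _ _)).trans_lt ha
    refine ⟨a, hprev, fun _ => ⟨fun i hi => bound_spec p.2 i (hbd.le.trans hi), ?_⟩⟩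
    have hul : u < low h0 hκ p.2 a := by
      refine lt_of_agree_lt δu (fun j hj => ?_) ?_
      · rw [fn_low_lt h0 hκ (hj.trans hδua)]; exact hδu1 j hj
      · rw [fn_low_lt h0 hκ hδua]; exact hδu2
    have hhv : high h0 hκ p.2 a < v := by
      refine lt_of_agree_lt δv (fun j hj => ?_) ?_
      · rw [fn_high_lt h0 hκ (hj.trans hδva)]; exact hδv1 j hj
      · rw [fn_high_lt h0 hκ hδva]; exact hδv2
    intro z hz
    exact hsub ⟨hul.trans hz.1, hz.2.trans hhv⟩
  · obtain ⟨a, ha⟩ := exists_gt_idx h0 prev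
    exact ⟨a, ha, fun h => absurd h hleg⟩

/-- The cut points used by player II, defined by recursion on the history. -/
def alpha : ∀ n : ℕ, (Fin (n+1) → Set (LexSpace κ lam) × LexSpace κ lam) → LexIdx lam
  | 0 => fun h =>
      Classical.choose (exists_good h0 hκ (h 0)
        (Classical.choice (idx_nonempty h0)))
  | (n+1) => fun h =>
      Classical.choose (exists_good h0 hκ (h (Fin.last (n+1)))
        (alpha n (fun m => h m.castSucc)))

/-- Player II's strategy. -/
def resp (n : ℕ) (h : Fin (n+1) → Set (LexSpace κ lam) × LexSpace κ lam) :
    Set (LexSpace κ lam) :=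
  Set.Ioo (low h0 hκ (h (Fin.last n)).2 (alpha h0 hκ n h))
    (high h0 hκ (h (Fin.last n)).2 (alpha h0 hκ n h))

theorem alpha_good (n : ℕ) (h : Fin (n+1) → Set (LexSpace κ lam) × LexSpace κ lam)
    (hleg : IsOpen (h (Fin.last n)).1 ∧ (h (Fin.last n)).2 ∈ (h (Fin.last n)).1) :
    GoodAt h0 hκ (h (Fin.last n)) (alpha h0 hκ n h) := by
  cases n with
  | zero => exact (Classical.choose_spec (exists_good h0 hκ (h 0)
      (Classical.choice (idx_nonempty h0)))).2 hleg
  | succ n => exact (Classical.choose_spec (exists_good h0 hκ (h (Fin.last (n+1)))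
      (alpha h0 hκ n (fun m => h m.castSucc)))).2 hleg

theorem alpha_succ_gt (n : ℕ) (h : Fin (n+2) → Set (LexSpace κ lam) × LexSpace κ lam) :
    alpha h0 hκ n (fun m => h m.castSucc) < alpha h0 hκ (n+1) h :=
  (Classical.choose_spec (exists_good h0 hκ (h (Fin.last (n+1)))
    (alpha h0 hκ n (fun m => h m.castSucc)))).1

end
end S15
namespace S15
noncomputable section
open Classical

variable {κ lam : Cardinal.{0}}

local notation "o0" => ((0 : Ordinal) : WithBot Ordinal)
local notation "o1" => ((1 : Ordinal) : WithBot Ordinal)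

variable (h0 : Cardinal.aleph0 ≤ lam) (hκ : lam < κ)

theorem win (play : ℕ → Set (LexSpace κ lam) × LexSpace κ lam)
    (hlegal : ∀ n, IsOpen (play n).1 ∧ (play n).2 ∈ (play n).1)
    (hsub : ∀ n, (play (n + 1)).1 ⊆ resp h0 hκ n (fun m => play m)) :
    (∀ n, IsOpen (resp h0 hκ n (fun m : Fin (n + 1) => play m)) ∧
          (play n).2 ∈ resp h0 hκ n (fun m : Fin (n + 1) => play m) ∧
          resp h0 hκ n (fun m : Fin (n + 1) => play m) ⊆ (play n).1) ∧
    (⋂ n, resp h0 hκ n (fun m : Fin (n + 1) => play m)).Nonempty := by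
  classical
  set f : ℕ → LexSpace κ lam := fun n => (play n).2 with hf
  set a : ℕ → LexIdx lam := fun n => alpha h0 hκ n (fun m : Fin (n+1) => play ↑m) with ha
  have hgood : ∀ n, GoodAt h0 hκ (play n) (a n) := fun n =>
    alpha_good h0 hκ n (fun m : Fin (n+1) => play ↑m) (hlegal n)
  have hsupp : ∀ n, ∀ i, a n ≤ i → fn (f n) i = o0 := fun n => (hgood n).1
  set A : ℕ → Set (LexSpace κ lam) :=
    fun n => Set.Ioo (low h0 hκ (f n) (a n)) (high h0 hκ (f n) (a n)) with hA
  have hrespA : ∀ n, resp h0 hκ n (fun m : Fin (n+1) => play ↑m) = A n := fun n => rfl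
  have hAsubB : ∀ n, A n ⊆ (play n).1 := fun n => (hgood n).2
  have hmemA : ∀ n, f n ∈ A n := fun n => ⟨low_lt h0 hκ (hsupp n), lt_high h0 hκ (hsupp n)⟩
  have hchain : ∀ n, A (n+1) ⊆ A n := by
    intro n z hz
    have h1 : z ∈ (play (n+1)).1 := hAsubB (n+1) hz
    have h2 := hsub n h1
    rwa [hrespA] at h2
  have hAmono : ∀ m k, m ≤ k → A k ⊆ A m := by
    intro m k hmk
    induction k, hmk using Nat.le_induction with
    | base => exact subset_rfl
    | succ k hmk ih => exact (hchain k).trans ih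
  have hfmem : ∀ m k, m < k → f k ∈ A m := by
    intro m k hmk
    obtain ⟨j, rfl⟩ : ∃ j, k = j + 1 := ⟨k-1, by omega⟩
    have h1 := hsub j (hlegal (j+1)).2
    rw [hrespA] at h1
    exact hAmono m j (by omega) h1
  have hastrict : StrictMono a := by
    apply strictMono_nat_of_lt_succ
    intro n
    have h1 := alpha_succ_gt h0 hκ n (fun m : Fin (n+2) => play ↑m)
    simp only [Fin.coe_castSucc] at h1
    exact h1
  have hagree_succ : ∀ k i, i < a k → fn (f (k+1)) i = fn (f k) i := by
    intro k
    by_contra hc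
    push_neg at hc
    obtain ⟨i0, hi0, hne0⟩ := hc
    obtain ⟨δ, hδ, hmin⟩ := (IsWellFounded.wf (α := LexIdx lam) (r := (· < ·))).has_min
      {i | i < a k ∧ fn (f (k+1)) i ≠ fn (f k) i} ⟨i0, hi0, hne0⟩
    obtain ⟨hδa, hδne⟩ := hδ
    have hag : ∀ j, j < δ → fn (f (k+1)) j = fn (f k) j := by
      intro j hj
      by_contra h'
      exact hmin j ⟨hj.trans hδa, h'⟩ hj
    have hmem := hfmem k (k+1) (lt_add_one k)
    have h1 : fn (low h0 hκ (f k) (a k)) δ < fn (f (k+1)) δ := by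
      refine first_diff hmem.1 δ (fun j hj => ?_) ?_
      · rw [fn_low_lt h0 hκ (hj.trans hδa)]; exact (hag j hj).symm
      · rw [fn_low_lt h0 hκ hδa]; exact fun h => hδne h.symm
    have h2 : fn (f (k+1)) δ < fn (high h0 hκ (f k) (a k)) δ := by
      refine first_diff hmem.2 δ (fun j hj => ?_) ?_
      · rw [fn_high_lt h0 hκ (hj.trans hδa)]; exact hag j hj
      · rw [fn_high_lt h0 hκ hδa]; exact hδne
    rw [fn_low_lt h0 hκ hδa] at h1
    rw [fn_high_lt h0 hκ hδa] at h2
    exact absurd (h1.trans h2) (lt_irrefl _)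
  have hagree : ∀ m k, m ≤ k → ∀ i, i < a m → fn (f k) i = fn (f m) i := by
    intro m k hmk
    induction k, hmk using Nat.le_induction with
    | base => intro i _; rfl
    | succ k hmk ih =>
      intro i hi
      rw [hagree_succ k i (hi.trans_le (hastrict.monotone hmk)), ih i hi]
  -- the limit coordinate
  set e := Ordinal.ToType.mk (o := (Order.succ lam).ord) with he
  set o : ℕ → Ordinal := fun n => (e.symm (a n)).1 with ho
  have hostrict : ∀ n, o n < o (n+1) := fun n =>
    Subtype.coe_lt_coe.2 (e.symm.lt_iff_lt.2 (hastrict (lt_add_one n)))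
  set u := ⨆ n, o n with hu
  have huΛ : u < (Order.succ lam).ord := by
    apply Ordinal.iSup_lt_ord
    · rw [(Cardinal.isRegular_succ h0).cof_eq, Cardinal.mk_nat]
      exact h0.trans_lt (Order.lt_succ lam)
    · exact fun n => (e.symm (a n)).2
  have hou : ∀ n, o n < u := fun n =>
    (hostrict n).trans_le (le_ciSup (Ordinal.bddAbove_range o) (n+1))
  set atop : LexIdx lam := e ⟨u, huΛ⟩ with hatop
  have haatop : ∀ n, a n < atop := by
    intro n
    have h1 : e.symm (a n) < (⟨u, huΛ⟩ : Set.Iio (Order.succ lam).ord) :=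
      Subtype.coe_lt_coe.1 (hou n)
    have h2 := e.lt_iff_lt.2 h1
    rwa [OrderIso.apply_symm_apply] at h2
  have hlt_atop : ∀ i, i < atop → ∃ n, i < a n := by
    intro i hi
    have h1 : (e.symm i).1 < u := by
      have h2 := e.symm.lt_iff_lt.2 hi
      rw [hatop, OrderIso.symm_apply_apply] at h2
      exact Subtype.coe_lt_coe.2 h2
    rw [hu, Ordinal.lt_iSup_iff] at h1
    obtain ⟨n, hn⟩ := h1
    refine ⟨n, ?_⟩
    have h2 : e.symm i < e.symm (a n) := Subtype.coe_lt_coe.1 hn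
    have h3 := e.lt_iff_lt.2 h2
    rwa [OrderIso.apply_symm_apply, OrderIso.apply_symm_apply] at h3
  -- the candidate limit function
  set G0 : LexIdx lam → WithBot Ordinal := fun i =>
    if h : ∃ n, i < a n then fn (f (Classical.choose h)) i else o0 with hG0def
  have hG0 : ∀ n i, i < a n → G0 i = fn (f n) i := by
    intro n i hi
    have hex : ∃ n, i < a n := ⟨n, hi⟩
    have hik : i < a (Classical.choose hex) := Classical.choose_spec hex
    have h1 := hagree (Classical.choose hex) (max (Classical.choose hex) n)
      (le_max_left _ _) i hik
    have h2 := hagree n (max (Classical.choose hex) n) (le_max_right _ _) i hi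
    calc G0 i = fn (f (Classical.choose hex)) i := by rw [hG0def]; exact dif_pos hex
    _ = fn (f n) i := by rw [← h1, h2]
  have hG0far : ∀ i, (∀ n, a n ≤ i) → G0 i = o0 := by
    intro i hi
    rw [hG0def]
    exact dif_neg (by push_neg; exact hi)
  set CA : Prop := ∃ m, ∀ i, i < atop → G0 i = fn (low h0 hκ (f m) (a m)) i with hCA
  set CB : Prop := ∃ m, ∀ i, i < atop → G0 i = fn (high h0 hκ (f m) (a m)) i with hCB
  set c : WithBot Ordinal := if CA then o1 else if CB then ⊥ else o0 with hc
  set G : LexIdx lam → WithBot Ordinal := fun i => if i = atop then c else G0 i with hG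
  have hGbelow : ∀ i, i ≠ atop → G i = G0 i := by
    intro i hi; rw [hG]; exact if_neg hi
  have hGatop : G atop = c := by rw [hG]; exact if_pos rfl
  have hlowhigh : ∀ m n, low h0 hκ (f m) (a m) < high h0 hκ (f n) (a n) := by
    intro m n
    rcases lt_trichotomy m n with h | rfl | h
    · exact ((hfmem m n h).1).trans (lt_high h0 hκ (hsupp n))
    · exact (low_lt h0 hκ (hsupp m)).trans (lt_high h0 hκ (hsupp m))
    · exact (low_lt h0 hκ (hsupp m)).trans (hfmem n m h).2
  have hABexcl : ¬ (CA ∧ CB) := by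
    rintro ⟨⟨m, hm⟩, ⟨k, hk⟩⟩
    have heq : low h0 hκ (f m) (a m) = high h0 hκ (f k) (a k) := by
      apply ext_fn
      intro i
      rcases lt_or_ge i atop with hi | hi
      · exact (hm i hi).symm.trans (hk i hi)
      · rw [fn_low_gt h0 hκ ((haatop m).trans_le hi), fn_high_gt h0 hκ ((haatop k).trans_le hi)]
    exact absurd heq (hlowhigh m k).ne
  have hGmem : toLex G ∈ LexFun κ lam := by
    constructor
    · intro i
      rw [show ofLex (toLex G) i = G i from rfl]
      by_cases h1 : i = atop
      · rw [h1, hGatop, hc]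
        split_ifs with h2 h3
        · exact Or.inr ⟨1, one_lt_kord h0 hκ, rfl⟩
        · exact Or.inl rfl
        · exact Or.inr ⟨0, zero_lt_kord h0 hκ, rfl⟩
      · rw [hGbelow i h1]
        by_cases h2 : ∃ n, i < a n
        · rw [show G0 i = fn (f (Classical.choose h2)) i from dif_pos h2]
          exact (f (Classical.choose h2)).2.1 i
        · rw [show G0 i = o0 from dif_neg h2]
          exact Or.inr ⟨0, zero_lt_kord h0 hκ, rfl⟩
    · obtain ⟨b, hb⟩ := exists_gt_idx h0 atop
      refine ⟨b, fun i hi => ?_⟩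
      have h1 : i ≠ atop := (hb.trans_le hi).ne'
      rw [show ofLex (toLex G) i = G i from rfl, hGbelow i h1]
      exact hG0far i fun n => ((haatop n).trans (hb.trans_le hi)).le
  set gX : LexSpace κ lam := ⟨toLex G, hGmem⟩ with hgX
  have hfngX : ∀ i, fn gX i = G i := fun _ => rfl
  have claimL : ∀ n, low h0 hκ (f n) (a n) < gX := by
    intro n
    by_cases hd : ∀ i, i < atop → G i = fn (low h0 hκ (f n) (a n)) i
    · have hCAh : CA := ⟨n, fun i hi => by rw [← hGbelow i hi.ne]; exact hd i hi⟩
      have hc1 : c = o1 := by rw [hc]; exact if_pos hCAh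
      refine lt_of_agree_lt atop (fun j hj => (hd j hj).symm) ?_
      rw [hfngX, hGatop, hc1, fn_low_gt h0 hκ (haatop n)]
      exact WithBot.coe_lt_coe.2 zero_lt_one
    · push_neg at hd
      obtain ⟨i0, hi0, hne0⟩ := hd
      obtain ⟨δ, hδ, hmin⟩ := (IsWellFounded.wf (α := LexIdx lam) (r := (· < ·))).has_min
        {i | i < atop ∧ G i ≠ fn (low h0 hκ (f n) (a n)) i} ⟨i0, hi0, hne0⟩
      obtain ⟨hδtop, hδne⟩ := hδ
      have hag : ∀ j, j < δ → G j = fn (low h0 hκ (f n) (a n)) j := by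
        intro j hj
        by_contra h'
        exact hmin j ⟨hj.trans hδtop, h'⟩ hj
      by_cases hk : ∃ k, δ < a k
      · obtain ⟨k0, hk0⟩ := hk
        have hδk : δ < a (max k0 (n+1)) := hk0.trans_le (hastrict.monotone (le_max_left _ _))
        have hGδ : G δ = fn (f (max k0 (n+1))) δ := by
          rw [hGbelow δ hδtop.ne, hG0 (max k0 (n+1)) δ hδk]
        have hGj : ∀ j, j < δ → G j = fn (f (max k0 (n+1))) j := fun j hj => by
          rw [hGbelow j ((hj.trans hδtop).ne), hG0 (max k0 (n+1)) j (hj.trans hδk)]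
        have hlk : low h0 hκ (f n) (a n) < f (max k0 (n+1)) :=
          (hfmem n (max k0 (n+1)) (lt_of_lt_of_le (lt_add_one n) (le_max_right _ _))).1
        have h1 : fn (low h0 hκ (f n) (a n)) δ < fn (f (max k0 (n+1))) δ := by
          refine first_diff hlk δ (fun j hj => ?_) ?_
          · rw [← hGj j hj]; exact (hag j hj).symm
          · rw [← hGδ]; exact fun h => hδne h.symm
        exact lt_of_agree_lt δ (fun j hj => (hag j hj).symm) (by rw [hfngX, hGδ]; exact h1)
      · push_neg at hk
        exfalso
        have h1 : G δ = o0 := by rw [hGbelow δ hδtop.ne]; exact hG0far δ hk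
        have h2 : a n < δ := by
          rcases (hk n).lt_or_eq with h | h
          · exact h
          · exfalso
            have h3 := hastrict (lt_add_one n)
            rw [h] at h3
            exact absurd h3 (not_lt.2 (hk (n+1)))
        exact hδne (h1.trans (fn_low_gt h0 hκ h2).symm)
  have claimU : ∀ n, gX < high h0 hκ (f n) (a n) := by
    intro n
    by_cases hd : ∀ i, i < atop → G i = fn (high h0 hκ (f n) (a n)) i
    · have hCBh : CB := ⟨n, fun i hi => by rw [← hGbelow i hi.ne]; exact hd i hi⟩
      have hCAn : ¬ CA := fun hCAh => hABexcl ⟨hCAh, hCBh⟩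
      have hc1 : c = ⊥ := by rw [hc, if_neg hCAn]; exact if_pos hCBh
      refine lt_of_agree_lt atop (fun j hj => hd j hj) ?_
      rw [hfngX, hGatop, hc1, fn_high_gt h0 hκ (haatop n)]
      exact WithBot.bot_lt_coe _
    · push_neg at hd
      obtain ⟨i0, hi0, hne0⟩ := hd
      obtain ⟨δ, hδ, hmin⟩ := (IsWellFounded.wf (α := LexIdx lam) (r := (· < ·))).has_min
        {i | i < atop ∧ G i ≠ fn (high h0 hκ (f n) (a n)) i} ⟨i0, hi0, hne0⟩
      obtain ⟨hδtop, hδne⟩ := hδ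
      have hag : ∀ j, j < δ → G j = fn (high h0 hκ (f n) (a n)) j := by
        intro j hj
        by_contra h'
        exact hmin j ⟨hj.trans hδtop, h'⟩ hj
      by_cases hk : ∃ k, δ < a k
      · obtain ⟨k0, hk0⟩ := hk
        have hδk : δ < a (max k0 (n+1)) := hk0.trans_le (hastrict.monotone (le_max_left _ _))
        have hGδ : G δ = fn (f (max k0 (n+1))) δ := by
          rw [hGbelow δ hδtop.ne, hG0 (max k0 (n+1)) δ hδk]
        have hGj : ∀ j, j < δ → G j = fn (f (max k0 (n+1))) j := fun j hj => by
          rw [hGbelow j ((hj.trans hδtop).ne), hG0 (max k0 (n+1)) j (hj.trans hδk)]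
        have hhk : f (max k0 (n+1)) < high h0 hκ (f n) (a n) :=
          (hfmem n (max k0 (n+1)) (lt_of_lt_of_le (lt_add_one n) (le_max_right _ _))).2
        have h1 : fn (f (max k0 (n+1))) δ < fn (high h0 hκ (f n) (a n)) δ := by
          refine first_diff hhk δ (fun j hj => ?_) ?_
          · rw [← hGj j hj]; exact hag j hj
          · rw [← hGδ]; exact hδne
        exact lt_of_agree_lt δ (fun j hj => hag j hj) (by rw [hfngX, hGδ]; exact h1)
      · push_neg at hk
        exfalso
        have h1 : G δ = o0 := by rw [hGbelow δ hδtop.ne]; exact hG0far δ hk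
        have h2 : a n < δ := by
          rcases (hk n).lt_or_eq with h | h
          · exact h
          · exfalso
            have h3 := hastrict (lt_add_one n)
            rw [h] at h3
            exact absurd h3 (not_lt.2 (hk (n+1)))
        exact hδne (h1.trans (fn_high_gt h0 hκ h2).symm)
  constructor
  · intro n
    refine ⟨?_, ?_, ?_⟩
    · rw [hrespA]; exact isOpen_Ioo
    · rw [hrespA]; exact hmemA n
    · rw [hrespA]; exact hAsubB n
  · refine ⟨gX, Set.mem_iInter.2 fun n => ?_⟩
    rw [hrespA]
    exact ⟨claimL n, claimU n⟩

end
end S15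
namespace S15
noncomputable section
open Classical

variable {κ lam : Cardinal.{0}}

local notation "o0" => ((0 : Ordinal) : WithBot Ordinal)

variable (h0 : Cardinal.aleph0 ≤ lam) (hκ : lam < κ)

theorem resp_isOpen (n : ℕ) (h : Fin (n+1) → Set (LexSpace κ lam) × LexSpace κ lam) :
    IsOpen (resp h0 hκ n h) := isOpen_Ioo

theorem resp_legal (n : ℕ) (h : Fin (n+1) → Set (LexSpace κ lam) × LexSpace κ lam)
    (hleg : IsOpen (h (Fin.last n)).1 ∧ (h (Fin.last n)).2 ∈ (h (Fin.last n)).1) :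
    (h (Fin.last n)).2 ∈ resp h0 hκ n h ∧ resp h0 hκ n h ⊆ (h (Fin.last n)).1 := by
  have hg := alpha_good h0 hκ n h hleg
  exact ⟨⟨low_lt h0 hκ hg.1, lt_high h0 hκ hg.1⟩, hg.2⟩

include h0 hκ in
theorem space_nonempty : Nonempty (LexSpace κ lam) := by
  refine ⟨⟨toLex (fun _ => o0), fun i => Or.inr ⟨0, zero_lt_kord h0 hκ, rfl⟩, ?_⟩⟩
  exact ⟨Classical.choice (idx_nonempty h0), fun i _ => rfl⟩

include h0 hκ in
theorem baire : BaireSpace (LexSpace κ lam) := by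
  constructor
  intro U hUopen hUdense
  rw [dense_iff_inter_open]
  intro V hV hVne
  haveI : Nonempty (LexSpace κ lam) := space_nonempty h0 hκ
  classical
  set pick : Set (LexSpace κ lam) → LexSpace κ lam :=
    fun A => if h : A.Nonempty then h.some else Classical.arbitrary _ with hpick
  have hpick_mem : ∀ A : Set (LexSpace κ lam), A.Nonempty → pick A ∈ A := by
    intro A hA
    rw [show pick A = if h : A.Nonempty then h.some else Classical.arbitrary _ from rfl,
      dif_pos hA]
    exact hA.some_mem
  set H : ∀ n : ℕ, Fin (n+1) → Set (LexSpace κ lam) × LexSpace κ lam :=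
    fun n => Nat.rec (motive := fun n => Fin (n+1) → Set (LexSpace κ lam) × LexSpace κ lam)
      (fun _ => (V ∩ U 0, pick (V ∩ U 0)))
      (fun n ih => Fin.snoc ih
        (resp h0 hκ n ih ∩ U (n+1), pick (resp h0 hκ n ih ∩ U (n+1)))) n
    with hH
  have hHsucc : ∀ n, H (n+1) = Fin.snoc (H n)
      (resp h0 hκ n (H n) ∩ U (n+1), pick (resp h0 hκ n (H n) ∩ U (n+1))) := fun n => rfl
  set play : ℕ → Set (LexSpace κ lam) × LexSpace κ lam := fun n => H n (Fin.last n)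
    with hplaydef
  have hcast : ∀ n (m : Fin (n+1)), H (n+1) m.castSucc = H n m := by
    intro n m; rw [hHsucc]; exact Fin.snoc_castSucc _ _ m
  have hagree : ∀ n (m : Fin (n+1)), H n m = play (m : ℕ) := by
    intro n
    induction n with
    | zero =>
      intro m
      have : m = Fin.last 0 := Fin.ext (by omega)
      rw [this]; rfl
    | succ n ih =>
      intro m
      rcases Fin.eq_castSucc_or_eq_last m with ⟨j, rfl⟩ | rfl
      · rw [hcast n j, ih j]; rfl
      · rfl
  have hplaysucc : ∀ n, play (n+1) =
      (resp h0 hκ n (H n) ∩ U (n+1), pick (resp h0 hκ n (H n) ∩ U (n+1))) := by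
    intro n
    rw [hplaydef]
    show H (n+1) (Fin.last (n+1)) = _
    rw [hHsucc]
    exact Fin.snoc_last _ _
  have hplay0 : play 0 = (V ∩ U 0, pick (V ∩ U 0)) := rfl
  have hVU0 : (V ∩ U 0).Nonempty := (hUdense 0).inter_open_nonempty V hV hVne
  have hlast : ∀ n, H n (Fin.last n) = play n := fun n => rfl
  have hinv : ∀ n, IsOpen (play n).1 ∧ (play n).2 ∈ (play n).1 := by
    intro n
    induction n with
    | zero =>
      rw [hplay0]
      exact ⟨hV.inter (hUopen 0), hpick_mem _ hVU0⟩
    | succ n ih =>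
      have hlegn : IsOpen (H n (Fin.last n)).1 ∧ (H n (Fin.last n)).2 ∈ (H n (Fin.last n)).1 := by
        rw [hlast n]; exact ih
      have hmem := (resp_legal h0 hκ n (H n) hlegn).1
      have hne : (resp h0 hκ n (H n) ∩ U (n+1)).Nonempty :=
        (hUdense (n+1)).inter_open_nonempty _ (resp_isOpen h0 hκ n (H n)) ⟨_, hmem⟩
      rw [hplaysucc n]
      exact ⟨(resp_isOpen h0 hκ n (H n)).inter (hUopen (n+1)), hpick_mem _ hne⟩
  have hfunagree : ∀ n, (fun m : Fin (n+1) => play (m : ℕ)) = H n := by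
    intro n; funext m; exact (hagree n m).symm
  have hsubs : ∀ n, (play (n+1)).1 ⊆ resp h0 hκ n (fun m : Fin (n+1) => play (m : ℕ)) := by
    intro n
    rw [hfunagree n, hplaysucc n]
    exact Set.inter_subset_left
  obtain ⟨hleg2, ⟨z, hz⟩⟩ := win h0 hκ play hinv hsubs
  have hzmem : ∀ n, z ∈ (play n).1 := fun n =>
    (hleg2 n).2.2 (Set.mem_iInter.1 hz n)
  refine ⟨z, ?_, ?_⟩
  · have h1 := hzmem 0
    rw [hplay0] at h1
    exact h1.1
  · rw [Set.mem_iInter]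
    intro n
    cases n with
    | zero =>
      have h1 := hzmem 0
      rw [hplay0] at h1
      exact h1.2
    | succ n =>
      have h1 := hzmem (n+1)
      rw [hplaysucc n] at h1
      exact h1.2

end
end S15

/-- Player II has a winning strategy in the strong Choquet game on `X`; in particular `X`
is a Baire space. -/
theorem statement15 (κ lam : Cardinal.{0}) (h0 : Cardinal.aleph0 ≤ lam)
    (hcf : κ.ord.cof ≤ lam) (hlt : lam < κ) :
    IIWinsStrongChoquet (LexSpace κ lam) ∧ BaireSpace (LexSpace κ lam) := by
  constructor
  · exact ⟨S15.resp h0 hlt, fun play hlegal hsub => S15.win h0 hlt play hlegal hsub⟩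
  · exact S15.baire h0 hlt
end

section
/- For every infinite cardinal λ and every cardinal κ with cf(κ) ≤ λ < κ, there is a Baire, non-archimedean (hence hereditarily paracompact) linearly ordered topological space X with dis(X) ≤ λ⁺ < κ ≤ Δ(X). In particular, the gap between dis(X) and Δ(X) for hereditarily paracompact Baire LOTS can be arbitrarily large. -/
open Ordinal Cardinal Set Classical
set_option linter.unusedSectionVars false
set_option maxHeartbeats 1000000

noncomputable section

abbrev Om : Ordinal.{1} := (Cardinal.aleph 1 : Cardinal.{1}).ord
abbrev I : Type 1 := Om.ToType

lemma Om_ne_zero : Om ≠ 0 := by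
  intro h
  have h2 : (Cardinal.aleph 1 : Cardinal.{1}) = 0 := by
    have := congrArg Ordinal.card h
    simpa [Cardinal.card_ord] using this
  exact (Cardinal.aleph_pos 1).ne' h2

instance : Nonempty I := Ordinal.nonempty_toType_iff.mpr Om_ne_zero

lemma Om_isLimit : Order.IsSuccLimit Om := Cardinal.isSuccLimit_ord (Cardinal.aleph0_le_aleph 1)

def eI : Set.Iio Om ≃o I := Ordinal.ToType.mk

def oI (x : I) : Ordinal.{1} := (eI.symm x).1

lemma oI_lt (x : I) : oI x < Om := (eI.symm x).2

lemma oI_lt_oI {x y : I} : oI x < oI y ↔ x < y := by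
  rw [show (oI x < oI y) ↔ eI.symm x < eI.symm y from Iff.rfl.trans (by
    constructor
    · exact fun h => Subtype.mk_lt_mk.mpr h
    · exact fun h => Subtype.mk_lt_mk.mp h)]
  exact eI.symm.lt_iff_lt

lemma oI_le_oI {x y : I} : oI x ≤ oI y ↔ x ≤ y := by
  constructor
  · intro h; by_contra hc
    exact absurd (oI_lt_oI.mpr (not_le.mp hc)) (not_lt.mpr h)
  · intro h; by_contra hc
    exact absurd (oI_lt_oI.mp (not_le.mp hc)) (not_lt.mpr h)

def mkI (o : Ordinal.{1}) (h : o < Om) : I := eI ⟨o, h⟩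

lemma oI_mkI (o : Ordinal.{1}) (h : o < Om) : oI (mkI o h) = o := by
  simp [oI, mkI]

def succI (x : I) : I :=
  mkI (oI x + 1) (by rw [Ordinal.add_one_eq_succ]; exact Om_isLimit.succ_lt (oI_lt x))

lemma lt_succI (x : I) : x < succI x := by
  rw [← oI_lt_oI, succI, oI_mkI]
  exact lt_of_lt_of_le (Order.lt_succ (oI x)) (by rw [Ordinal.add_one_eq_succ])

lemma succI_le_of_lt {x y : I} (h : x < y) : succI x ≤ y := by
  rw [← oI_le_oI, succI, oI_mkI, Ordinal.add_one_eq_succ]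
  exact Order.succ_le_of_lt (oI_lt_oI.mpr h)

lemma card_lt_a1_of_lt {o : Ordinal.{1}} (h : o < Om) : o.card < Cardinal.aleph 1 :=
  Cardinal.lt_ord.mp h

lemma lt_a1_iff {c : Cardinal.{1}} : c < Cardinal.aleph 1 ↔ c ≤ Cardinal.aleph0 := by
  rw [← Cardinal.succ_aleph0]
  exact Order.lt_succ_iff

/-- ordinal `limAbove x`: a "successor-closed" (limit) level strictly above `x`. -/
def limAbove (x : I) : I :=
  mkI (oI x + ω) (by
    rw [Cardinal.lt_ord, Ordinal.card_add]
    have h1 : (oI x).card ≤ Cardinal.aleph0 := lt_a1_iff.mp (card_lt_a1_of_lt (oI_lt x))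
    have h2 : (ω : Ordinal.{1}).card = Cardinal.aleph0 := Ordinal.card_omega0
    rw [h2, lt_a1_iff]
    exact le_trans (add_le_add h1 (le_refl _)) (by simp))

lemma lt_limAbove (x : I) : x < limAbove x := by
  rw [← oI_lt_oI, limAbove, oI_mkI]
  simpa using Ordinal.omega0_pos

lemma limAbove_mono {x y : I} (h : x ≤ y) : limAbove x ≤ limAbove y := by
  simp only [← oI_le_oI, limAbove, oI_mkI]
  exact add_le_add_left (oI_le_oI.mpr h) ω

lemma succ_lt_limAbove {j x : I} (h : j < limAbove x) : succI j < limAbove x := by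
  rw [← oI_lt_oI, limAbove, oI_mkI] at h ⊢
  rw [succI, oI_mkI]
  rw [Ordinal.add_one_eq_succ]
  exact (Ordinal.isSuccLimit_add (oI x) Ordinal.isSuccLimit_omega0).succ_lt h

/-- countable families in `I` are bounded. -/
lemma bnd_of_mk_lt {ι : Type 1} (g : ι → I) (h : #ι < Cardinal.aleph 1) :
    ∃ b : I, ∀ i, g i < b := by
  have hcof : #ι < Om.cof := by
    rwa [Cardinal.isRegular_aleph_one.cof_eq]
  have hsup : (⨆ i, oI (g i)) < Om := Ordinal.iSup_lt_ord hcof (fun i => oI_lt _)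
  have hsup1 : (⨆ i, oI (g i)) + 1 < Om := by
    rw [Ordinal.add_one_eq_succ]; exact Om_isLimit.succ_lt hsup
  refine ⟨mkI _ hsup1, fun i => ?_⟩
  rw [← oI_lt_oI, oI_mkI]
  exact lt_of_le_of_lt (Ordinal.le_iSup (fun i => oI (g i)) i)
    (lt_of_lt_of_le (Order.lt_succ _) (by rw [Ordinal.add_one_eq_succ]))

lemma bnd_nat (g : ℕ → I) : ∃ b : I, ∀ n, g n < b := by
  have hcof : Cardinal.lift.{1} #ℕ < Om.cof := by
    rw [Cardinal.isRegular_aleph_one.cof_eq]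
    simpa using Cardinal.aleph0_lt_aleph_one
  have hsup : (⨆ n, oI (g n)) < Om := Ordinal.iSup_lt_ord_lift hcof (fun i => oI_lt _)
  have hsup1 : (⨆ n, oI (g n)) + 1 < Om := by
    rw [Ordinal.add_one_eq_succ]; exact Om_isLimit.succ_lt hsup
  refine ⟨mkI _ hsup1, fun i => ?_⟩
  rw [← oI_lt_oI, oI_mkI]
  exact lt_of_le_of_lt (Ordinal.le_iSup (fun n => oI (g n)) i)
    (lt_of_lt_of_le (Order.lt_succ _) (by rw [Ordinal.add_one_eq_succ]))

lemma mk_Iic_lt (m : I) : #(Set.Iic m) < Cardinal.aleph 1 := by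
  have hinj : Function.Injective (fun j : Set.Iic m => (Ordinal.ToType.mk)
      ⟨oI j.1, by
        have : oI j.1 ≤ oI m := oI_le_oI.mpr j.2
        exact lt_of_le_of_lt this (lt_of_lt_of_le (Order.lt_succ _)
          (Ordinal.add_one_eq_succ (oI m)).ge)⟩) := by
    intro a b hab
    have := (Ordinal.ToType.mk).injective hab
    have h2 : oI a.1 = oI b.1 := congrArg (fun z : Set.Iio (oI m + 1) => z.1) this
    have : a.1 = b.1 := le_antisymm (oI_le_oI.mp h2.le) (oI_le_oI.mp h2.ge)
    exact Subtype.ext this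
  have hle := Cardinal.mk_le_of_injective hinj
  rw [Cardinal.mk_toType] at hle
  refine lt_of_le_of_lt hle ?_
  rw [Ordinal.card_add, lt_a1_iff]
  have h1 : (oI m).card ≤ Cardinal.aleph0 := lt_a1_iff.mp (card_lt_a1_of_lt (oI_lt m))
  exact le_trans (add_le_add h1 (by simp [Ordinal.card_one]; exact Cardinal.one_le_aleph0)) (by simp)

section UV
variable (K : Type 1) [LinearOrder K] [Nonempty K]

abbrev ZZ : Type 1 := ULift.{1} ℤ

abbrev U : Type 1 := Lex (I × Lex (K × ZZ))

variable {K}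

def mkU (c : I) (k : K) (n : ℤ) : U K := toLex (c, toLex (k, ULift.up n))

def c1 (u : U K) : I := (ofLex u).1
def k1 (u : U K) : K := (ofLex (ofLex u).2).1
def n1 (u : U K) : ℤ := ((ofLex (ofLex u).2).2).down

lemma U_dest (u : U K) : u = mkU (c1 u) (k1 u) (n1 u) := rfl

lemma ltU_iff {u v : U K} : u < v ↔
    c1 u < c1 v ∨ (c1 u = c1 v ∧ (k1 u < k1 v ∨ (k1 u = k1 v ∧ n1 u < n1 v))) := by
  conv_lhs => rw [U_dest u, U_dest v]
  rw [mkU, mkU, Prod.Lex.lt_iff]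
  constructor
  · rintro (h | ⟨h1, h2⟩)
    · exact Or.inl h
    · refine Or.inr ⟨h1, ?_⟩
      rw [Prod.Lex.lt_iff] at h2
      rcases h2 with h | ⟨h3, h4⟩
      · exact Or.inl h
      · exact Or.inr ⟨h3, ULift.up_lt.{0,1}.mp h4⟩
  · rintro (h | ⟨h1, h2⟩)
    · exact Or.inl h
    · refine Or.inr ⟨h1, ?_⟩
      rw [Prod.Lex.lt_iff]
      rcases h2 with h | ⟨h3, h4⟩
      · exact Or.inl h
      · exact Or.inr ⟨h3, ULift.up_lt.{0,1}.mpr h4⟩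

lemma mkU_lt_mkU {c c' : I} {k k' : K} {n n' : ℤ} :
    mkU c k n < mkU (K := K) c' k' n' ↔ c < c' ∨ (c = c' ∧ (k < k' ∨ (k = k' ∧ n < n'))) := by
  rw [ltU_iff]
  rfl

def predU (u : U K) : U K := mkU (c1 u) (k1 u) (n1 u - 1)

lemma predU_lt (u : U K) : predU u < u := by
  conv_rhs => rw [U_dest u]
  rw [predU, mkU_lt_mkU]
  exact Or.inr ⟨rfl, Or.inr ⟨rfl, by omega⟩⟩

lemma le_predU {w u : U K} (h : w < u) : w ≤ predU u := by
  rw [ltU_iff] at h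
  rcases h with h | ⟨h1, h⟩
  · exact le_of_lt (by rw [U_dest w, predU, mkU_lt_mkU]; exact Or.inl h)
  · rcases h with h | ⟨h2, h3⟩
    · exact le_of_lt (by rw [U_dest w, predU, mkU_lt_mkU]; exact Or.inr ⟨h1, Or.inl h⟩)
    · rcases lt_or_eq_of_le (by omega : n1 w ≤ n1 u - 1) with h4 | h4
      · exact le_of_lt (by rw [U_dest w, predU, mkU_lt_mkU]; exact Or.inr ⟨h1, Or.inr ⟨h2, h4⟩⟩)
      · refine le_of_eq ?_
        rw [U_dest w, predU, h1, h2, h4]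

variable (K)

def wUg (α : I) : U K := mkU α (Classical.arbitrary K) 0

variable {K}

lemma wUg_mono {α α' : I} (h : α ≤ α') : wUg K α ≤ wUg K α' := by
  rcases lt_or_eq_of_le h with h | h
  · exact le_of_lt (by rw [wUg, wUg, mkU_lt_mkU]; exact Or.inl h)
  · rw [h]

lemma lt_wUg {u : U K} {β : I} (h : c1 u < β) : u < wUg K β := by
  rw [U_dest u, wUg, mkU_lt_mkU]
  exact Or.inl h

abbrev V (K : Type 1) [LinearOrder K] : Type 1 := WithBot (U K)

lemma Vle_predU {z : V K} {u : U K} (h : z < (↑u : V K)) : z ≤ (↑(predU u) : V K) := by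
  induction z using WithBot.recBotCoe with
  | bot => exact bot_le
  | coe w => exact WithBot.coe_le_coe.mpr (le_predU (WithBot.coe_lt_coe.mp h))

end UV

section AX
variable {K : Type 1} [LinearOrder K] [Nonempty K]

variable (K) in
abbrev A : Type 1 := Lex (∀ _ : I, V K)

def ap (f : A K) (i : I) : V K := ofLex f i

lemma ltA_iff {f g : A K} :
    f < g ↔ ∃ i, (∀ j, j < i → ap f j = ap g j) ∧ ap f i < ap g i := Iff.rfl

lemma ltA_intro {f g : A K} (i : I) (hb : ∀ j, j < i → ap f j = ap g j)
    (hi : ap f i < ap g i) : f < g := ltA_iff.mpr ⟨i, hb, hi⟩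

lemma A_ext {f g : A K} (h : ∀ i, ap f i = ap g i) : f = g := funext h

lemma convA {l u z : A K} {δ : I} (hag : ∀ i, i < δ → ap l i = ap u i)
    (h1 : l ≤ z) (h2 : z ≤ u) : ∀ i, i < δ → ap z i = ap l i := by
  by_contra hc
  push_neg at hc
  obtain ⟨i0, hi0, hne⟩ := hc
  set S := {i : I | i < δ ∧ ap z i ≠ ap l i} with hSdef
  have hS : S.Nonempty := ⟨i0, hi0, hne⟩
  set m := WellFounded.min wellFounded_lt S hS with hmdef
  have hm : m ∈ S := WellFounded.min_mem _ S hS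
  have hag2 : ∀ j, j < m → ap z j = ap l j := by
    intro j hj
    by_contra hne2
    exact WellFounded.not_lt_min wellFounded_lt S ⟨lt_trans hj hm.1, hne2⟩ hj
  rcases lt_or_gt_of_ne hm.2 with h | h
  · exact absurd (ltA_intro m hag2 h) (not_lt.mpr h1)
  · refine absurd (ltA_intro m (fun j hj => ((hag j (lt_trans hj hm.1)).symm.trans
      (hag2 j hj).symm)) ?_) (not_lt.mpr h2)
    rw [← hag m hm.1]
    exact h

def updA (f : A K) (i : I) (v : V K) : A K := toLex (Function.update (ofLex f) i v)

lemma ap_updA {f : A K} {i j : I} {v : V K} :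
    ap (updA f i v) j = if j = i then v else ap f j := by
  simp [updA, ap, Function.update_apply]

lemma ap_updA_self {f : A K} {i : I} {v : V K} : ap (updA f i v) i = v := by
  simp [ap_updA]

lemma ap_updA_ne {f : A K} {i j : I} {v : V K} (h : j ≠ i) : ap (updA f i v) j = ap f j := by
  simp [ap_updA, h]

variable (K) in
def XX : Type 1 := {f : A K // ∃ m, ap f m ≠ ⊥ ∧ ∀ i, ap f i ≠ ⊥ → i ≤ m}

noncomputable instance : LinearOrder (XX K) := by unfold XX; infer_instance

lemma ltX_iff {x y : XX K} : x < y ↔ x.1 < y.1 := Subtype.coe_lt_coe.symm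

lemma leX_iff {x y : XX K} : x ≤ y ↔ x.1 ≤ y.1 := Subtype.coe_le_coe.symm

lemma X_ext {x y : XX K} (h : ∀ i, ap x.1 i = ap y.1 i) : x = y := Subtype.ext (A_ext h)

def ms (x : XX K) : I := choose x.2

lemma ms_ne_bot (x : XX K) : ap x.1 (ms x) ≠ ⊥ := (choose_spec x.2).1

lemma le_ms {x : XX K} {i : I} (h : ap x.1 i ≠ ⊥) : i ≤ ms x := (choose_spec x.2).2 i h

lemma ap_eq_bot {x : XX K} {i : I} (h : ms x < i) : ap x.1 i = ⊥ := by
  by_contra h'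
  exact absurd (le_ms h') (not_le.mpr h)

def vms (x : XX K) : U K := choose ((WithBot.ne_bot_iff_exists).mp (ms_ne_bot x))

lemma ap_ms (x : XX K) : ap x.1 (ms x) = ↑(vms x) :=
  (choose_spec ((WithBot.ne_bot_iff_exists).mp (ms_ne_bot x))).symm

/-- `x` is the minimum of the "cone" of functions agreeing with it below `δ > ms x`. -/
lemma cone_min {x z : XX K} {δ : I} (hδ : ms x < δ)
    (hc : ∀ i, i < δ → ap z.1 i = ap x.1 i) : x ≤ z := by
  by_contra h
  rw [not_le, ltX_iff, ltA_iff] at h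
  obtain ⟨i, hb, hi⟩ := h
  have hxbot : ap x.1 i ≠ ⊥ := fun hbot => by
    rw [hbot] at hi
    exact not_lt_bot hi
  have hile : i ≤ ms x := le_ms hxbot
  exact (hi.ne (hc i (lt_of_le_of_lt hile hδ))).elim

/-- point above `x`: bump at fresh position. -/
def bumpX (x : XX K) (P : I) (h : ms x < P) (u : U K) : XX K :=
  ⟨updA x.1 P ↑u, P, by rw [ap_updA_self]; exact WithBot.coe_ne_bot, by
    intro i hi
    rcases eq_or_ne i P with rfl | hne
    · exact le_refl _
    · rw [ap_updA_ne hne] at hi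
      exact le_trans (le_ms hi) (le_of_lt h)⟩

lemma lt_bumpX (x : XX K) (P : I) (h : ms x < P) (u : U K) : x < bumpX x P h u := by
  have hb : (bumpX x P h u).1 = updA x.1 P ↑u := rfl
  rw [ltX_iff, hb]
  refine ltA_intro P (fun j hj => (ap_updA_ne (ne_of_lt hj)).symm) ?_
  rw [ap_updA_self, ap_eq_bot h]
  exact WithBot.bot_lt_coe u

lemma ms_bumpX (x : XX K) (P : I) (h : ms x < P) (u : U K) : ms (bumpX x P h u) = P := by
  have h1 : ap (bumpX x P h u).1 (ms (bumpX x P h u)) ≠ ⊥ := ms_ne_bot _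
  have h2 := le_ms (x := bumpX x P h u) (i := P) (by rw [show (bumpX x P h u).1 = updA x.1 P ↑u from rfl, ap_updA_self]; exact WithBot.coe_ne_bot)
  refine le_antisymm ?_ h2
  by_contra hc
  push_neg at hc
  have hPne : ms (bumpX x P h u) ≠ P := ne_of_gt hc
  rw [show (bumpX x P h u).1 = updA x.1 P ↑u from rfl, ap_updA_ne hPne] at h1
  exact absurd (lt_of_le_of_lt (le_ms h1) h) (not_lt.mpr (le_of_lt hc))

/-- the attachment lower bound `aX x α < x`. -/
def aX (x : XX K) (α : I) : XX K :=
  ⟨updA (updA x.1 (ms x) ↑(predU (vms x))) (succI (ms x)) ↑(wUg K α), succI (ms x), by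
    rw [ap_updA_self]; exact WithBot.coe_ne_bot, by
    intro i hi
    rcases eq_or_ne i (succI (ms x)) with rfl | hne
    · exact le_refl _
    · rw [ap_updA_ne hne] at hi
      rcases eq_or_ne i (ms x) with rfl | hne2
      · exact le_of_lt (lt_succI _)
      · rw [ap_updA_ne hne2] at hi
        exact le_trans (le_ms hi) (le_of_lt (lt_succI _))⟩

lemma ap_aX_ms (x : XX K) (α : I) : ap (aX x α).1 (ms x) = ↑(predU (vms x)) := by
  rw [show (aX x α).1 = updA (updA x.1 (ms x) ↑(predU (vms x))) (succI (ms x)) ↑(wUg K α) from rfl,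
    ap_updA_ne (ne_of_lt (lt_succI (ms x))), ap_updA_self]

lemma ap_aX_succ (x : XX K) (α : I) : ap (aX x α).1 (succI (ms x)) = ↑(wUg K α) := by
  rw [show (aX x α).1 = updA (updA x.1 (ms x) ↑(predU (vms x))) (succI (ms x)) ↑(wUg K α) from rfl,
    ap_updA_self]

lemma ap_aX_of_ne {x : XX K} {α : I} {j : I} (h1 : j ≠ ms x) (h2 : j ≠ succI (ms x)) :
    ap (aX x α).1 j = ap x.1 j := by
  rw [show (aX x α).1 = updA (updA x.1 (ms x) ↑(predU (vms x))) (succI (ms x)) ↑(wUg K α) from rfl,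
    ap_updA_ne h2, ap_updA_ne h1]

lemma aX_lt (x : XX K) (α : I) : aX x α < x := by
  rw [ltX_iff]
  refine ltA_intro (ms x) (fun j hj => ?_) ?_
  · exact ap_aX_of_ne (ne_of_lt hj) (ne_of_lt (lt_trans hj (lt_succI _)))
  · rw [ap_aX_ms, ap_ms]
    exact WithBot.coe_lt_coe.mpr (predU_lt _)

noncomputable instance : NoMaxOrder (XX K) :=
  ⟨fun x => ⟨bumpX x (succI (ms x)) (lt_succI _) (wUg K (ms x)), lt_bumpX _ _ _ _⟩⟩

noncomputable instance : NoMinOrder (XX K) :=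
  ⟨fun x => ⟨aX x (ms x), aX_lt _ _⟩⟩

instance : Nonempty (XX K) :=
  ⟨⟨updA (toLex (fun _ => (⊥ : V K))) (Classical.arbitrary I) ↑(wUg K (Classical.arbitrary I)),
    Classical.arbitrary I, by rw [ap_updA_self]; exact WithBot.coe_ne_bot, by
      intro i hi
      rcases eq_or_ne i (Classical.arbitrary I) with rfl | hne
      · exact le_refl _
      · rw [ap_updA_ne hne] at hi
        exact absurd rfl hi⟩⟩

end AX

section TOP
variable {K : Type 1} [LinearOrder K] [Nonempty K]

noncomputable instance topX : TopologicalSpace (XX K) := Preorder.topology (XX K)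

instance : OrderTopology (XX K) := ⟨rfl⟩

lemma nhds_witness {x : XX K} {W : Set (XX K)} (hW : IsOpen W) (hx : x ∈ W) :
    ∃ p q : XX K, x ∈ Set.Ioo p q ∧ Set.Ioo p q ⊆ W :=
  mem_nhds_iff_exists_Ioo_subset.mp (hW.mem_nhds hx)

lemma ltX_elim {x y : XX K} (h : x < y) :
    ∃ i, (∀ j, j < i → ap x.1 j = ap y.1 j) ∧ ap x.1 i < ap y.1 i :=
  ltA_iff.mp (ltX_iff.mp h)

lemma neq_bot_of_lt {z w : V K} (h : z < w) : w ≠ ⊥ := by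
  intro hb
  rw [hb] at h
  exact not_lt_bot h

lemma coneIoo {x q : XX K} (h : x < q) :
    ∃ δ, ms x < δ ∧ ∀ z : XX K, (∀ i, i < δ → ap z.1 i = ap x.1 i) → x ≤ z ∧ z < q := by
  obtain ⟨d, hd1, hd2⟩ := ltX_elim h
  refine ⟨succI (max (ms x) d), lt_of_le_of_lt (le_max_left _ _) (lt_succI _), fun z hz => ?_⟩
  constructor
  · exact cone_min (lt_of_le_of_lt (le_max_left _ _) (lt_succI _)) hz
  · rw [ltX_iff]
    refine ltA_intro d (fun j hj => ?_) ?_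
    · rw [hz j (lt_trans hj (lt_of_le_of_lt (le_max_right _ _) (lt_succI _)))]
      exact hd1 j hj
    · rw [hz d (lt_of_le_of_lt (le_max_right _ _) (lt_succI _))]
      exact hd2

lemma inj_into_open {W : Set (XX K)} (hW : IsOpen W) (hne : W.Nonempty) :
    ∃ φ : K → XX K, Function.Injective φ ∧ ∀ k, φ k ∈ W := by
  obtain ⟨x, hx⟩ := hne
  obtain ⟨p, q, hxpq, hsub⟩ := nhds_witness hW hx
  obtain ⟨δ, hδ, hcone⟩ := coneIoo hxpq.2
  refine ⟨fun k => bumpX x δ hδ (mkU (Classical.arbitrary I) k 0), ?_, ?_⟩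
  · intro k k' hkk
    have h1 : ap (bumpX x δ hδ (mkU (Classical.arbitrary I) k 0)).1 δ
        = ap (bumpX x δ hδ (mkU (Classical.arbitrary I) k' 0)).1 δ :=
      congrArg (fun z : XX K => ap z.1 δ) hkk
    have h2 : (↑(mkU (K := K) (Classical.arbitrary I) k 0) : V K)
        = ↑(mkU (K := K) (Classical.arbitrary I) k' 0) := by
      have e1 : (bumpX x δ hδ (mkU (Classical.arbitrary I) k 0)).1
          = updA x.1 δ ↑(mkU (Classical.arbitrary I) k 0) := rfl
      have e2 : (bumpX x δ hδ (mkU (Classical.arbitrary I) k' 0)).1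
          = updA x.1 δ ↑(mkU (Classical.arbitrary I) k' 0) := rfl
      rw [e1, e2, ap_updA_self, ap_updA_self] at h1
      exact h1
    have h3 : mkU (K := K) (Classical.arbitrary I) k 0 = mkU (Classical.arbitrary I) k' 0 :=
      WithBot.coe_injective h2
    have h4 := congrArg k1 h3
    exact h4
  · intro k
    apply hsub
    have hmem : ∀ i, i < δ → ap (bumpX x δ hδ (mkU (Classical.arbitrary I) k 0)).1 i = ap x.1 i :=
      fun i hi => ap_updA_ne (ne_of_lt hi)
    obtain ⟨h5, h6⟩ := hcone _ hmem
    exact ⟨lt_of_lt_of_le hxpq.1 h5, h6⟩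

/-- the discrete pieces. -/
def DD (K : Type 1) [LinearOrder K] (δ : I) : Set (XX K) := {x | ms x = δ}

lemma DD_discrete (δ : I) (f : XX K) (hf : f ∈ DD K δ) :
    ∃ Uo : Set (XX K), IsOpen Uo ∧ Uo ∩ DD K δ = {f} := by
  have hfδ : ms f = δ := hf
  subst hfδ
  refine ⟨Set.Ioo (aX f (ms f)) (bumpX f (succI (ms f)) (lt_succI _) (wUg K (ms f))),
    isOpen_Ioo, ?_⟩
  apply Set.Subset.antisymm
  · rintro g ⟨⟨hag, hgb⟩, hgD⟩
    have hgm : ms g = ms f := hgD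
    simp only [Set.mem_singleton_iff]
    rcases lt_trichotomy g f with hlt | heq | hgt
    · obtain ⟨i, hib, hii⟩ := ltX_elim hlt
      have hile : i ≤ ms f := le_ms (neq_bot_of_lt hii)
      rcases lt_or_eq_of_le hile with hiδ | hiδ
      · refine ((lt_asymm hag) ?_).elim
        rw [ltX_iff]
        refine ltA_intro i (fun j hj => ?_) ?_
        · rw [hib j hj]
          exact (ap_aX_of_ne (ne_of_lt (lt_trans hj hiδ))
            (ne_of_lt (lt_trans (lt_trans hj hiδ) (lt_succI _)))).symm
        · rw [ap_aX_of_ne (ne_of_lt hiδ) (ne_of_lt (lt_trans hiδ (lt_succI _)))]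
          exact hii
      · subst hiδ
        have hvlt2 : ap g.1 (ms f) < ↑(vms f) := (ap_ms f) ▸ hii
        have hvle : ap g.1 (ms f) ≤ ↑(predU (vms f)) := Vle_predU hvlt2
        rcases lt_or_eq_of_le hvle with hvlt | hveq
        · refine ((lt_asymm hag) ?_).elim
          rw [ltX_iff]
          refine ltA_intro (ms f) (fun j hj => ?_) ?_
          · rw [hib j hj]
            exact (ap_aX_of_ne (ne_of_lt hj) (ne_of_lt (lt_trans hj (lt_succI _)))).symm
          · rw [ap_aX_ms]
            exact hvlt
        · refine ((lt_asymm hag) ?_).elim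
          rw [ltX_iff]
          refine ltA_intro (succI (ms f)) (fun j hj => ?_) ?_
          · have hjle : j ≤ ms f := by
              by_contra hc
              exact absurd (succI_le_of_lt (not_le.mp hc)) (not_le.mpr hj)
            rcases lt_or_eq_of_le hjle with hjlt | hjeq
            · rw [hib j hjlt]
              exact (ap_aX_of_ne (ne_of_lt hjlt) (ne_of_lt (lt_trans hjlt (lt_succI _)))).symm
            · rw [hjeq, hveq, ap_aX_ms]
          · rw [ap_eq_bot (x := g) (by rw [hgm]; exact lt_succI _), ap_aX_succ]
            exact WithBot.bot_lt_coe _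
    · exact heq
    · obtain ⟨i, hib, hii⟩ := ltX_elim hgt
      have hile : i ≤ ms g := le_ms (neq_bot_of_lt hii)
      refine ((lt_asymm hgb) ?_).elim
      rw [ltX_iff]
      have hiP : i ≠ succI (ms f) := ne_of_lt (lt_of_le_of_lt (hile.trans hgm.le) (lt_succI _))
      have hbe : (bumpX f (succI (ms f)) (lt_succI _) (wUg K (ms f))).1
          = updA f.1 (succI (ms f)) ↑(wUg K (ms f)) := rfl
      refine ltA_intro i (fun j hj => ?_) ?_
      · rw [hbe, ap_updA_ne (ne_of_lt (lt_of_lt_of_le hj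
          (le_of_lt (lt_of_le_of_lt (hile.trans hgm.le) (lt_succI _)))))]
        exact hib j hj
      · rw [hbe, ap_updA_ne hiP]
        exact hii
  · intro g hg
    rcases hg with rfl
    exact ⟨⟨aX_lt _ _, lt_bumpX _ _ _ _⟩, hf⟩

end TOP

section CLS
variable {K : Type 1} [LinearOrder K] [Nonempty K]

def trunc (f : A K) (ℓ : I) : A K := toLex (fun i => if i < ℓ then ap f i else ⊥)

lemma ap_trunc {f : A K} {ℓ i : I} : ap (trunc f ℓ) i = if i < ℓ then ap f i else ⊥ := rfl

lemma trunc_mono {f g : A K} (ℓ : I) (h : f ≤ g) : trunc f ℓ ≤ trunc g ℓ := by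
  rcases lt_or_eq_of_le h with hlt | heq
  · obtain ⟨i, hb, hi⟩ := ltA_iff.mp hlt
    rcases lt_or_ge i ℓ with hiℓ | hiℓ
    · refine le_of_lt (ltA_intro i (fun j hj => ?_) ?_)
      · rw [ap_trunc, ap_trunc]
        rcases lt_or_ge j ℓ with h' | h'
        · rw [if_pos h', if_pos h', hb j hj]
        · rw [if_neg (not_lt.mpr h'), if_neg (not_lt.mpr h')]
      · rw [ap_trunc, ap_trunc, if_pos hiℓ, if_pos hiℓ]
        exact hi
    · refine le_of_eq (A_ext fun j => ?_)
      rw [ap_trunc, ap_trunc]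
      rcases lt_or_ge j ℓ with h' | h'
      · rw [if_pos h', if_pos h', hb j (lt_of_lt_of_le h' hiℓ)]
      · rw [if_neg (not_lt.mpr h'), if_neg (not_lt.mpr h')]
  · rw [heq]

lemma trunc_lt_elim {f g : A K} {ℓ : I} (h : trunc f ℓ < trunc g ℓ) :
    ∃ i, i < ℓ ∧ (∀ j, j < i → ap f j = ap g j) ∧ ap f i < ap g i := by
  obtain ⟨i, hb, hi⟩ := ltA_iff.mp h
  rw [ap_trunc, ap_trunc] at hi
  rcases lt_or_ge i ℓ with hiℓ | hiℓ
  · rw [if_pos hiℓ, if_pos hiℓ] at hi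
    refine ⟨i, hiℓ, fun j hj => ?_, hi⟩
    have := hb j hj
    rw [ap_trunc, ap_trunc, if_pos (lt_trans hj hiℓ), if_pos (lt_trans hj hiℓ)] at this
    exact this
  · rw [if_neg (not_lt.mpr hiℓ), if_neg (not_lt.mpr hiℓ)] at hi
    exact absurd hi (lt_irrefl _)

lemma trunc_lt_intro {f g : A K} {ℓ i : I} (hiℓ : i < ℓ)
    (hb : ∀ j, j < i → ap f j = ap g j) (hi : ap f i < ap g i) : trunc f ℓ < trunc g ℓ := by
  refine ltA_intro i (fun j hj => ?_) ?_
  · rw [ap_trunc, ap_trunc]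
    rcases lt_or_ge j ℓ with h' | h'
    · rw [if_pos h', if_pos h', hb j hj]
    · rw [if_neg (not_lt.mpr h'), if_neg (not_lt.mpr h')]
  · rw [ap_trunc, ap_trunc, if_pos hiℓ, if_pos hiℓ]
    exact hi

lemma trunc_eq_of_agree {f g : A K} {ℓ : I} (h : ∀ i, i < ℓ → ap f i = ap g i) :
    trunc f ℓ = trunc g ℓ := by
  refine A_ext fun j => ?_
  rw [ap_trunc, ap_trunc]
  rcases lt_or_ge j ℓ with h' | h'
  · rw [if_pos h', if_pos h', h j h']
  · rw [if_neg (not_lt.mpr h'), if_neg (not_lt.mpr h')]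

def AdmLen (α ℓ : I) : Prop := (∀ j, j < ℓ → succI j < ℓ) ∧ ℓ ≤ limAbove α

def vltA (y : A K) (α : I) : Prop := ∀ i, ap y i < ↑(wUg K α)

def tle (x : XX K) (y : A K) (ℓ : I) : Prop := trunc x.1 ℓ ≤ trunc y ℓ

def EqC (α : I) (x z : XX K) : Prop :=
  ∀ (y : A K) (ℓ : I), AdmLen α ℓ → vltA y α → (tle z y ℓ ↔ tle x y ℓ)

def Cl (α : I) (x : XX K) : Set (XX K) := {z | EqC α x z}

lemma mem_Cl_self (α : I) (x : XX K) : x ∈ Cl α x := fun _ _ _ _ => Iff.rfl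

lemma Cl_eq_of_mem {α : I} {x z : XX K} (h : z ∈ Cl α x) : Cl α z = Cl α x := by
  ext w
  constructor
  · intro hw y ℓ h1 h2
    exact (hw y ℓ h1 h2).trans (h y ℓ h1 h2)
  · intro hw y ℓ h1 h2
    exact (hw y ℓ h1 h2).trans (h y ℓ h1 h2).symm

lemma AdmLen_mono {α α' ℓ : I} (h : α ≤ α') (ha : AdmLen α ℓ) : AdmLen α' ℓ :=
  ⟨ha.1, le_trans ha.2 (limAbove_mono h)⟩

lemma vltA_mono {y : A K} {α α' : I} (h : α ≤ α') (hv : vltA y α) : vltA y α' :=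
  fun i => lt_of_lt_of_le (hv i) (WithBot.coe_le_coe.mpr (wUg_mono h))

lemma Cl_anti {α α' : I} (h : α ≤ α') (x : XX K) : Cl α' x ⊆ Cl α x := by
  intro z hz y ℓ h1 h2
  exact hz y ℓ (AdmLen_mono h h1) (vltA_mono h h2)

/-- left half-interval lemma -/
lemma left_half {x₁ z : XX K} {α : I} (haz : aX x₁ α < z) (hzx : z ≤ x₁) : EqC α x₁ z := by
  intro y ℓ hAdm hvlt
  constructor
  · -- tle z → tle x₁
    intro htz
    by_contra htx
    have ht : trunc y ℓ < trunc x₁.1 ℓ := not_le.mp htx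
    obtain ⟨j, hjℓ, hjag, hjv⟩ := trunc_lt_elim ht
    have hjms : j ≤ ms x₁ := le_ms (neq_bot_of_lt hjv)
    have htzx : trunc z.1 ℓ < trunc x₁.1 ℓ := lt_of_le_of_lt htz ht
    obtain ⟨i, hiℓ, hiag, hiv⟩ := trunc_lt_elim htzx
    have hims : i ≤ ms x₁ := le_ms (neq_bot_of_lt hiv)
    have hij : i ≤ j := by
      by_contra hc
      push_neg at hc
      refine absurd (trunc_lt_intro hjℓ (fun j' hj' => ?_) ?_ : trunc y ℓ < trunc z.1 ℓ)
        (not_lt.mpr htz)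
      · rw [hjag j' hj']
        exact (hiag j' (lt_trans hj' hc)).symm
      · rw [hiag j hc]
        exact hjv
    rcases lt_or_eq_of_le hims with hilt | hieq
    · refine absurd ?_ (lt_asymm haz)
      rw [ltX_iff]
      refine ltA_intro i (fun j' hj' => ?_) ?_
      · rw [hiag j' hj']
        exact (ap_aX_of_ne (ne_of_lt (lt_trans hj' hilt))
          (ne_of_lt (lt_trans (lt_trans hj' hilt) (lt_succI _)))).symm
      · rw [ap_aX_of_ne (ne_of_lt hilt) (ne_of_lt (lt_trans hilt (lt_succI _)))]
        exact hiv
    · subst hieq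
      have hzval : ap z.1 (ms x₁) < ↑(vms x₁) := (ap_ms x₁) ▸ hiv
      have hz_pred : ap z.1 (ms x₁) ≤ ↑(predU (vms x₁)) := Vle_predU hzval
      rcases lt_or_eq_of_le hz_pred with hvlt2 | hveq
      · refine absurd ?_ (lt_asymm haz)
        rw [ltX_iff]
        refine ltA_intro (ms x₁) (fun j' hj' => ?_) ?_
        · rw [hiag j' hj']
          exact (ap_aX_of_ne (ne_of_lt hj') (ne_of_lt (lt_trans hj' (lt_succI _)))).symm
        · rw [ap_aX_ms]
          exact hvlt2
      · have hjeq : j = ms x₁ := le_antisymm hjms hij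
        have hsℓ : succI (ms x₁) < ℓ := hAdm.1 _ (hjeq ▸ hjℓ)
        have hy_pred : ap y (ms x₁) ≤ ↑(predU (vms x₁)) :=
          Vle_predU ((ap_ms x₁) ▸ (hjeq ▸ hjv))
        have hz_sd : ap z.1 (succI (ms x₁)) < ↑(wUg K α) := by
          rcases lt_or_eq_of_le htz with hlt2 | heq2
          · obtain ⟨m, hmℓ, hmag, hmv⟩ := trunc_lt_elim hlt2
            rcases lt_trichotomy m (succI (ms x₁)) with hm | hm | hm
            · have hmle : m ≤ ms x₁ := by
                by_contra hc
                exact absurd (succI_le_of_lt (not_le.mp hc)) (not_le.mpr hm)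
              rcases lt_or_eq_of_le hmle with hm1 | hm1
              · exfalso
                have h2 := hmv
                rw [hiag m hm1, hjag m (hjeq ▸ hm1)] at h2
                exact absurd h2 (lt_irrefl _)
              · exfalso
                rw [hm1, hveq] at hmv
                exact absurd (lt_of_lt_of_le hmv hy_pred) (lt_irrefl _)
            · rw [← hm]
              exact lt_trans hmv (hvlt _)
            · rw [hmag _ hm]
              exact hvlt _
          · have := congrArg (fun t => ap t (succI (ms x₁))) heq2
            simp only [ap_trunc, if_pos hsℓ] at this
            rw [this]
            exact hvlt _
        refine absurd ?_ (lt_asymm haz)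
        rw [ltX_iff]
        refine ltA_intro (succI (ms x₁)) (fun j' hj' => ?_) ?_
        · have hjle : j' ≤ ms x₁ := by
            by_contra hc
            exact absurd (succI_le_of_lt (not_le.mp hc)) (not_le.mpr hj')
          rcases lt_or_eq_of_le hjle with hjlt | hjeq2
          · rw [hiag j' hjlt]
            exact (ap_aX_of_ne (ne_of_lt hjlt) (ne_of_lt (lt_trans hjlt (lt_succI _)))).symm
          · rw [hjeq2, hveq, ap_aX_ms]
        · rw [ap_aX_succ]
          exact hz_sd
  · -- tle x₁ → tle z
    intro htx
    exact le_trans (trunc_mono ℓ (leX_iff.mp hzx)) htx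

/-- right half-interval lemma -/
lemma right_half {x₁ z : XX K} {α : I}
    (hxz : x₁ ≤ z)
    (hzb : z < bumpX x₁ (succI (max (limAbove α) (ms x₁)))
      (lt_of_le_of_lt (le_max_right _ _) (lt_succI _)) (wUg K α)) : EqC α x₁ z := by
  set P := succI (max (limAbove α) (ms x₁)) with hP
  set b := bumpX x₁ P (lt_of_le_of_lt (le_max_right _ _) (lt_succI _)) (wUg K α) with hbd
  have hagx : ∀ i, i < P → ap x₁.1 i = ap b.1 i := by
    intro i hi
    have hbe : (b).1 = updA x₁.1 P ↑(wUg K α) := rfl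
    rw [hbe, ap_updA_ne (ne_of_lt hi)]
  have hzag : ∀ i, i < P → ap z.1 i = ap x₁.1 i :=
    convA hagx (leX_iff.mp hxz) (le_of_lt (ltX_iff.mp hzb))
  intro y ℓ hAdm hvlt
  have hℓP : ℓ ≤ limAbove α := hAdm.2
  have htr : trunc z.1 ℓ = trunc x₁.1 ℓ := by
    refine trunc_eq_of_agree fun i hi => ?_
    exact hzag i (lt_of_lt_of_le (lt_of_lt_of_le hi hℓP)
      (le_of_lt (lt_of_le_of_lt (le_max_left _ _) (lt_succI _))))
  unfold tle
  rw [htr]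

lemma isOpen_Cl (α : I) (x : XX K) : IsOpen (Cl α x) := by
  rw [isOpen_iff_mem_nhds]
  intro x₁ hx₁
  have hb := lt_bumpX x₁ (succI (max (limAbove α) (ms x₁)))
    (lt_of_le_of_lt (le_max_right _ _) (lt_succI _)) (wUg K α)
  refine Filter.mem_of_superset (Ioo_mem_nhds (aX_lt x₁ α) hb) ?_
  rintro z ⟨h1, h2⟩
  have hzx1 : EqC α x₁ z := by
    rcases le_total z x₁ with hle | hge
    · exact left_half h1 hle
    · exact right_half hge h2
  intro y ℓ ha hv
  exact (hzx1 y ℓ ha hv).trans (hx₁ y ℓ ha hv)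

end CLS

section SHRINK
variable {K : Type 1} [LinearOrder K] [Nonempty K]

def fcV (v : V K) : I := WithBot.recBotCoe (Classical.arbitrary I) c1 v

lemma vbound (x : XX K) : ∃ β : I, ∀ i, ap x.1 i < ↑(wUg K β) := by
  obtain ⟨b, hb⟩ := bnd_of_mk_lt (fun i : Set.Iic (ms x) => fcV (ap x.1 i.1)) (mk_Iic_lt (ms x))
  refine ⟨max b (succI (Classical.arbitrary I)), fun i => ?_⟩
  cases hv : ap x.1 i with
  | none => exact WithBot.bot_lt_coe _
  | some u =>
    have hile : i ≤ ms x := le_ms (by rw [hv]; exact WithBot.coe_ne_bot)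
    have h1 : fcV (ap x.1 i) < b := hb ⟨i, hile⟩
    rw [hv] at h1
    have h2 : c1 u < max b (succI (Classical.arbitrary I)) :=
      lt_of_lt_of_le h1 (le_max_left _ _)
    exact WithBot.coe_lt_coe.mpr (lt_wUg h2)

lemma Cl_subset_of_open {x₀ : XX K} {W : Set (XX K)} (hW : IsOpen W) (hx : x₀ ∈ W) :
    ∃ α, Cl α x₀ ⊆ W := by
  obtain ⟨p, q, hxpq, hsub⟩ := nhds_witness hW hx
  obtain ⟨d₁, hd₁ag, hd₁v⟩ := ltX_elim hxpq.1
  obtain ⟨d₂, hd₂ag, hd₂v⟩ := ltX_elim hxpq.2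
  obtain ⟨β₁, hβ₁⟩ := vbound p
  obtain ⟨β₂, hβ₂⟩ := vbound x₀
  set ℓ₁ := limAbove d₁ with hℓ₁
  set ℓ₂ := limAbove d₂ with hℓ₂
  set α := max (max ℓ₁ ℓ₂) (max β₁ β₂) with hα
  have hAdm₁ : AdmLen α ℓ₁ := by
    refine ⟨fun j hj => succ_lt_limAbove hj, ?_⟩
    have h1 : d₁ ≤ α := le_trans (le_of_lt (lt_limAbove d₁))
      (le_trans (le_max_left _ _) (le_max_left _ _))
    exact le_trans (le_of_eq rfl) (limAbove_mono h1)
  have hAdm₂ : AdmLen α ℓ₂ := by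
    refine ⟨fun j hj => succ_lt_limAbove hj, ?_⟩
    have h1 : d₂ ≤ α := le_trans (le_of_lt (lt_limAbove d₂))
      (le_trans (le_max_right _ _) (le_max_left _ _))
    exact le_trans (le_of_eq rfl) (limAbove_mono h1)
  have hv₁ : vltA p.1 α := fun i => lt_of_lt_of_le (hβ₁ i)
    (WithBot.coe_le_coe.mpr (wUg_mono (le_trans (le_max_left _ _) (le_max_right _ _))))
  have hv₂ : vltA x₀.1 α := fun i => lt_of_lt_of_le (hβ₂ i)
    (WithBot.coe_le_coe.mpr (wUg_mono (le_trans (le_max_right _ _) (le_max_right _ _))))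
  refine ⟨α, fun z hz => ?_⟩
  apply hsub
  constructor
  · -- p < z
    have hiff := hz p.1 ℓ₁ hAdm₁ hv₁
    have hnx : ¬ tle x₀ p.1 ℓ₁ := by
      apply not_le.mpr
      exact trunc_lt_intro (lt_limAbove d₁) (fun j hj => hd₁ag j hj) hd₁v
    have hnz : ¬ tle z p.1 ℓ₁ := fun h => hnx (hiff.mp h)
    have hlt : trunc p.1 ℓ₁ < trunc z.1 ℓ₁ := not_le.mp hnz
    obtain ⟨i, hiℓ, hiag, hiv⟩ := trunc_lt_elim hlt
    rw [ltX_iff]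
    exact ltA_intro i (fun j hj => (hiag j hj).symm ▸ rfl) hiv
  · -- z < q
    have hiff := hz x₀.1 ℓ₂ hAdm₂ hv₂
    have htx : tle x₀ x₀.1 ℓ₂ := le_refl _
    have htz : tle z x₀.1 ℓ₂ := hiff.mpr htx
    rcases lt_or_eq_of_le htz with hlt | heq
    · obtain ⟨i, hiℓ, hiag, hiv⟩ := trunc_lt_elim hlt
      rw [ltX_iff]
      rcases lt_trichotomy i d₂ with hc | hc | hc
      · refine ltA_intro i (fun j hj => ?_) ?_
        · rw [hiag j hj]
          exact hd₂ag j (lt_trans hj hc)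
        · rw [hd₂ag i hc] at hiv
          exact hiv
      · refine ltA_intro i (fun j hj => ?_) ?_
        · rw [hiag j hj]
          exact hd₂ag j (hc ▸ hj)
        · exact lt_trans hiv (hc ▸ hd₂v)
      · refine ltA_intro d₂ (fun j hj => ?_) ?_
        · rw [hiag j (lt_trans hj hc)]
          exact hd₂ag j hj
        · rw [hiag d₂ hc]
          exact hd₂v
    · rw [ltX_iff]
      have hzag : ∀ j, j < ℓ₂ → ap z.1 j = ap x₀.1 j := by
        intro j hj
        have := congrArg (fun t => ap t j) heq
        simp only [ap_trunc, if_pos hj] at this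
        exact this
      refine ltA_intro d₂ (fun j hj => ?_) ?_
      · rw [hzag j (lt_trans hj (lt_limAbove d₂))]
        exact hd₂ag j hj
      · rw [hzag d₂ (lt_limAbove d₂)]
        exact hd₂v

/-- the non-archimedean basis. -/
def NB (K : Type 1) [LinearOrder K] [Nonempty K] : Set (Set (XX K)) :=
  {u | ∃ α x, u = Cl α x}

lemma NB_basis : TopologicalSpace.IsTopologicalBasis (NB K) := by
  refine TopologicalSpace.isTopologicalBasis_of_isOpen_of_nhds ?_ ?_
  · rintro u ⟨α, x, rfl⟩
    exact isOpen_Cl α x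
  · intro x u hx hu
    obtain ⟨α, hα⟩ := Cl_subset_of_open hu hx
    exact ⟨Cl α x, ⟨α, x, rfl⟩, mem_Cl_self α x, hα⟩

lemma NB_chain : ∀ u ∈ NB K, ∀ v ∈ NB K, u ∩ v = ∅ ∨ u ⊆ v ∨ v ⊆ u := by
  rintro u ⟨α, x, rfl⟩ v ⟨β, y, rfl⟩
  rcases Set.eq_empty_or_nonempty (Cl α x ∩ Cl β y) with he | ⟨z, hz⟩
  · exact Or.inl he
  · rcases le_total α β with hab | hab
    · refine Or.inr (Or.inr ?_)
      have h1 : Cl β y = Cl β z := (Cl_eq_of_mem hz.2).symm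
      have h2 : Cl α x = Cl α z := (Cl_eq_of_mem hz.1).symm
      rw [h1, h2]
      exact Cl_anti hab z
    · refine Or.inr (Or.inl ?_)
      have h1 : Cl β y = Cl β z := (Cl_eq_of_mem hz.2).symm
      have h2 : Cl α x = Cl α z := (Cl_eq_of_mem hz.1).symm
      rw [h1, h2]
      exact Cl_anti hab z

/-- strict inclusion decreases level. -/
lemma Cl_lt_level {α β : I} {x y : XX K} (h : Cl α x ⊂ Cl β y) : β < α := by
  by_contra hc
  push_neg at hc
  have hx : x ∈ Cl β y := h.1 (mem_Cl_self α x)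
  have : Cl β y = Cl β x := (Cl_eq_of_mem hx).symm
  rw [this] at h
  exact (lt_iff_le_not_ge.mp h).2 (Cl_anti hc x)

end SHRINK

section BAIRE
variable {K : Type 1} [LinearOrder K] [Nonempty K]

def Cone (x : XX K) (δ : I) : Set (XX K) := {g | ∀ i, i < δ → ap g.1 i = ap x.1 i}

lemma self_mem_Cone (x : XX K) (δ : I) : x ∈ Cone x δ := fun _ _ => rfl

lemma Cone_subset_Ioo {x p q : XX K} {δ : I} (hδ : ms x < δ) (hp : p < x)
    {d : I} (hdag : ∀ j, j < d → ap x.1 j = ap q.1 j) (hdv : ap x.1 d < ap q.1 d)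
    (hdδ : d < δ) : Cone x δ ⊆ Set.Ioo p q := by
  intro z hz
  constructor
  · exact lt_of_lt_of_le hp (cone_min hδ hz)
  · rw [ltX_iff]
    refine ltA_intro d (fun j hj => ?_) ?_
    · rw [hz j (lt_trans hj hdδ)]
      exact hdag j hj
    · rw [hz d hdδ]
      exact hdv

lemma baire_step (x : XX K) (δ : I) (hδ : ms x < δ) (W : Set (XX K)) (hWo : IsOpen W)
    (hWd : Dense W) :
    ∃ (y : XX K) (ε : I), ms y < ε ∧ δ < ε ∧
      Cone y ε ⊆ W ∧ Cone y ε ⊆ Cone x δ := by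
  have hconeo : IsOpen (Cone x δ \ {x}) := by
    rw [isOpen_iff_mem_nhds]
    intro g hg
    have hgne : g ≠ x := by simpa using hg.2
    have hgx : x < g := lt_of_le_of_ne (cone_min hδ hg.1) (Ne.symm hgne)
    have hQ : ms g < succI (max (ms g) δ) := lt_of_le_of_lt (le_max_left _ _) (lt_succI _)
    have hgb : g < bumpX g (succI (max (ms g) δ)) hQ (wUg K δ) := lt_bumpX _ _ _ _
    refine Filter.mem_of_superset (Ioo_mem_nhds hgx hgb) ?_
    rintro z ⟨h1, h2⟩
    have hagree : ∀ i, i < δ → ap x.1 i =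
        ap (bumpX g (succI (max (ms g) δ)) hQ (wUg K δ)).1 i := by
      intro i hi
      have hbe : (bumpX g (succI (max (ms g) δ)) hQ (wUg K δ)).1
          = updA g.1 (succI (max (ms g) δ)) ↑(wUg K δ) := rfl
      rw [hbe, ap_updA_ne (ne_of_lt (lt_of_lt_of_le hi
        (le_of_lt (lt_of_le_of_lt (le_max_right _ _) (lt_succI _)))))]
      exact (hg.1 i hi).symm
    constructor
    · intro i hi
      exact convA hagree (leX_iff.mp (le_of_lt h1)) (leX_iff.mp (le_of_lt h2)) i hi
    · simp only [Set.mem_singleton_iff]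
      exact ne_of_gt h1
  have hne : (Cone x δ \ {x}).Nonempty := by
    refine ⟨bumpX x δ hδ (wUg K δ), fun i hi => ap_updA_ne (ne_of_lt hi), ?_⟩
    simp only [Set.mem_singleton_iff]
    exact ne_of_gt (lt_bumpX _ _ _ _)
  have hmeet := (dense_iff_inter_open.mp hWd) _ hconeo hne
  obtain ⟨y, hyi⟩ := hmeet
  have hopen2 : IsOpen ((Cone x δ \ {x}) ∩ W) := hconeo.inter hWo
  obtain ⟨p, q, hpq, hsub⟩ := nhds_witness hopen2 hyi
  obtain ⟨d, hdag, hdv⟩ := ltX_elim hpq.2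
  have hyc : y ∈ Cone x δ := hyi.1.1
  refine ⟨y, succI (max (max (ms y) δ) d), lt_of_le_of_lt
    (le_trans (le_max_left _ _) (le_max_left _ _)) (lt_succI _),
    lt_of_le_of_lt (le_trans (le_max_right _ _) (le_max_left _ _)) (lt_succI _), ?_, ?_⟩
  · intro z hz
    have : z ∈ Set.Ioo p q := Cone_subset_Ioo
      (lt_of_le_of_lt (le_trans (le_max_left _ _) (le_max_left _ _)) (lt_succI _)) hpq.1
      hdag hdv (lt_of_le_of_lt (le_max_right _ _) (lt_succI _)) hz
    exact (hsub this).2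
  · intro z hz
    have : z ∈ Set.Ioo p q := Cone_subset_Ioo
      (lt_of_le_of_lt (le_trans (le_max_left _ _) (le_max_left _ _)) (lt_succI _)) hpq.1
      hdag hdv (lt_of_le_of_lt (le_max_right _ _) (lt_succI _)) hz
    exact (hsub this).1.1

noncomputable instance baireX : BaireSpace (XX K) := by
  constructor
  intro F hFo hFd
  rw [dense_iff_inter_open]
  intro Vo hVo hVne
  obtain ⟨x₀, hx₀⟩ := hVne
  obtain ⟨p, q, hpq, hsub⟩ := nhds_witness hVo hx₀
  obtain ⟨d, hdag, hdv⟩ := ltX_elim hpq.2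
  have hms₀ : ms x₀ < succI (max (ms x₀) d) := lt_of_le_of_lt (le_max_left _ _) (lt_succI _)
  have hcone₀ : Cone x₀ (succI (max (ms x₀) d)) ⊆ Vo := by
    intro z hz
    exact hsub (Cone_subset_Ioo hms₀ hpq.1 hdag hdv
      (lt_of_le_of_lt (le_max_right _ _) (lt_succI _)) hz)
  have step : ∀ (s : {s : XX K × I // ms s.1 < s.2}) (n : ℕ),
      ∃ s' : {s : XX K × I // ms s.1 < s.2}, s.1.2 < s'.1.2 ∧
      Cone s'.1.1 s'.1.2 ⊆ F n ∧ Cone s'.1.1 s'.1.2 ⊆ Cone s.1.1 s.1.2 := by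
    rintro ⟨⟨x, δ⟩, hs⟩ n
    obtain ⟨y, ε, h1, h2, h4, h5⟩ := baire_step x δ hs (F n) (hFo n) (hFd n)
    exact ⟨⟨⟨y, ε⟩, h1⟩, h2, h4, h5⟩
  let R : ℕ → {s : XX K × I // ms s.1 < s.2} :=
    fun n => Nat.rec ⟨⟨x₀, succI (max (ms x₀) d)⟩, hms₀⟩ (fun n s => choose (step s n)) n
  have hspec : ∀ n, (R n).1.2 < (R (n+1)).1.2 ∧ Cone (R (n+1)).1.1 (R (n+1)).1.2 ⊆ F n ∧
      Cone (R (n+1)).1.1 (R (n+1)).1.2 ⊆ Cone (R n).1.1 (R n).1.2 :=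
    fun n => choose_spec (step (R n) n)
  have hchain : ∀ m n, m ≤ n → Cone (R n).1.1 (R n).1.2 ⊆ Cone (R m).1.1 (R m).1.2 := by
    intro m n h
    induction n, h using Nat.le_induction with
    | base => exact fun z hz => hz
    | succ n hmn ih => exact fun z hz => ih ((hspec n).2.2 hz)
  obtain ⟨Δ, hΔ⟩ := bnd_nat (fun n => (R n).1.2)
  have hgdef : ∀ i : I, ∃ v : V K, (∀ h : ∃ n, i < (R n).1.2, v = ap (R (Nat.find h)).1.1.1 i) ∧
      ((¬ ∃ n, i < (R n).1.2) → v = (if i = Δ then ↑(wUg K Δ) else ⊥)) := by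
    intro i
    by_cases h : ∃ n, i < (R n).1.2
    · exact ⟨ap (R (Nat.find h)).1.1.1 i, fun h' => by congr 1, fun h' => absurd h h'⟩
    · exact ⟨if i = Δ then ↑(wUg K Δ) else ⊥, fun h' => absurd h' h, fun _ => rfl⟩
  set gfun : I → V K := fun i => choose (hgdef i) with hgf
  have hagree : ∀ n i, i < (R n).1.2 → gfun i = ap (R n).1.1.1 i := by
    intro n i hi
    have hex : ∃ m, i < (R m).1.2 := ⟨n, hi⟩
    have h1 : gfun i = ap (R (Nat.find hex)).1.1.1 i := (choose_spec (hgdef i)).1 hex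
    have hfle : Nat.find hex ≤ n := Nat.find_le hi
    have h2 := hchain _ _ hfle (self_mem_Cone (R n).1.1 (R n).1.2) i (Nat.find_spec hex)
    rw [h1, h2]
  have hnotex : ¬ ∃ n, Δ < (R n).1.2 := by
    rintro ⟨n, hn⟩
    exact absurd hn (not_lt.mpr (le_of_lt (hΔ n)))
  have hgΔ : gfun Δ = ↑(wUg K Δ) := by
    have h2 := (choose_spec (hgdef Δ)).2 hnotex
    exact h2.trans (if_pos rfl)
  have hgbot : ∀ i, gfun i ≠ ⊥ → i ≤ Δ := by
    intro i hi
    by_cases h : ∃ n, i < (R n).1.2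
    · obtain ⟨n, hn⟩ := h
      exact le_of_lt (lt_trans hn (hΔ n))
    · rcases eq_or_ne i Δ with rfl | hne
      · exact le_refl _
      · exact absurd ((choose_spec (hgdef i)).2 h |>.trans (if_neg hne)) hi
  have hprop : ap (toLex gfun) Δ ≠ ⊥ ∧ ∀ i, ap (toLex gfun) i ≠ ⊥ → i ≤ Δ := by
    constructor
    · show gfun Δ ≠ ⊥
      rw [hgΔ]
      exact WithBot.coe_ne_bot
    · intro i hi
      exact hgbot i hi
  refine ⟨⟨toLex gfun, Δ, hprop⟩, ?_, ?_⟩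
  · apply hcone₀
    intro i hi
    exact hagree 0 i hi
  · refine Set.mem_iInter.mpr ?_
    intro n
    apply (hspec n).2.1
    intro i hi
    exact hagree (n + 1) i hi

end BAIRE

section PARA
variable {K : Type 1} [LinearOrder K] [Nonempty K]

lemma paracompact_subset (s : Set (XX K)) :
    @ParacompactSpace ↥s (TopologicalSpace.induced Subtype.val (topX (K := K))) := by
  letI : TopologicalSpace ↥s := TopologicalSpace.induced Subtype.val (topX (K := K))
  constructor
  intro ι u huo hucov
  have hchoice : ∀ x : ↥s, ∃ (α : I) (a : ι),
      (Subtype.val ⁻¹' (Cl α x.1) : Set ↥s) ⊆ u a := by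
    intro x
    have hx : x ∈ ⋃ a, u a := hucov.symm ▸ Set.mem_univ x
    obtain ⟨a, ha⟩ := Set.mem_iUnion.mp hx
    obtain ⟨W, hWo, hWeq⟩ := isOpen_induced_iff.mp (huo a)
    have hxW : x.1 ∈ W := by
      rw [← hWeq] at ha
      exact ha
    obtain ⟨α, hα⟩ := Cl_subset_of_open hWo hxW
    refine ⟨α, a, ?_⟩
    rw [← hWeq]
    exact fun z hz => hα hz
  choose lev ix hix using hchoice
  have hmax : ∀ x : ↥s, ∃ y : ↥s, Cl (lev x) x.1 ⊆ Cl (lev y) y.1 ∧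
      ∀ z : ↥s, Cl (lev y) y.1 ⊆ Cl (lev z) z.1 → Cl (lev z) z.1 = Cl (lev y) y.1 := by
    intro x
    set T := {β : I | ∃ y : ↥s, β = lev y ∧ Cl (lev x) x.1 ⊆ Cl (lev y) y.1} with hT
    have hTne : T.Nonempty := ⟨lev x, x, rfl, subset_rfl⟩
    obtain ⟨y, hy1, hy2⟩ := WellFounded.min_mem wellFounded_lt T hTne
    refine ⟨y, hy2, ?_⟩
    intro z hz
    by_cases heq : Cl (lev z) z.1 = Cl (lev y) y.1
    · exact heq
    · exfalso
      have hss : Cl (lev y) y.1 ⊂ Cl (lev z) z.1 := hz.ssubset_of_ne (fun h => heq h.symm)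
      have hlt : lev z < lev y := Cl_lt_level hss
      have hzT : lev z ∈ T := ⟨z, rfl, hy2.trans hz⟩
      exact (WellFounded.not_lt_min wellFounded_lt T hzT) (hy1 ▸ hlt)
  choose mx hmx1 hmx2 using hmax
  set MS : Set (Set (XX K)) := Set.range (fun x : ↥s => Cl (lev (mx x)) (mx x).1) with hMS
  refine ⟨↥MS, fun b => Subtype.val ⁻¹' b.1, ?_, ?_, ?_, ?_⟩
  · rintro ⟨b, z, rfl⟩
    exact isOpen_induced_iff.mpr ⟨_, isOpen_Cl _ _, rfl⟩
  · apply Set.eq_univ_of_forall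
    intro x
    rw [Set.mem_iUnion]
    exact ⟨⟨_, ⟨x, rfl⟩⟩, hmx1 x (mem_Cl_self _ _)⟩
  · intro x
    refine ⟨Subtype.val ⁻¹' Cl (lev (mx x)) (mx x).1, ?_, ?_⟩
    · exact IsOpen.mem_nhds (isOpen_induced_iff.mpr ⟨_, isOpen_Cl _ _, rfl⟩)
        (hmx1 x (mem_Cl_self _ _))
    · apply Set.Finite.subset (Set.finite_singleton (⟨_, ⟨x, rfl⟩⟩ : ↥MS))
      rintro ⟨b, z, rfl⟩ hb
      obtain ⟨w, hw1, hw2⟩ := hb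
      have hcc := NB_chain _ ⟨lev (mx z), (mx z).1, rfl⟩ _ ⟨lev (mx x), (mx x).1, rfl⟩
      have heq : Cl (lev (mx z)) (mx z).1 = Cl (lev (mx x)) (mx x).1 := by
        rcases hcc with hdis | hsub | hsub
        · exact absurd ⟨hw1, hw2⟩ (Set.eq_empty_iff_forall_notMem.mp hdis w.1)
        · exact (hmx2 z (mx x) hsub).symm
        · exact hmx2 x (mx z) hsub
      simp only [Set.mem_singleton_iff]
      exact Subtype.ext heq
  · rintro ⟨b, z, rfl⟩
    exact ⟨ix (mx z), hix (mx z)⟩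

end PARA

end

open Set Cardinal TopologicalSpace

/-- For all infinite cardinals `λ, κ` with `cf(κ) ≤ λ < κ` there is a Baire, non-archimedean
(hence hereditarily paracompact) LOTS `X` with `dis X ≤ λ⁺ < κ ≤ Delta X`. -/
theorem statement16 (κ lam : Cardinal.{0}) (h0 : Cardinal.aleph0 ≤ lam)
    (hcf : κ.ord.cof ≤ lam) (hlt : lam < κ) :
    ∃ (X : Type 1) (lo : LinearOrder X) (t : TopologicalSpace X),
      t = @Preorder.topology X lo.toPartialOrder.toPreorder ∧
      @BaireSpace X t ∧
      (∃ B : Set (Set X), @TopologicalSpace.IsTopologicalBasis X t B ∧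
        ∀ U ∈ B, ∀ V ∈ B, U ∩ V = ∅ ∨ U ⊆ V ∨ V ⊆ U) ∧
      (∀ s : Set X, @ParacompactSpace ↥s (TopologicalSpace.induced Subtype.val t)) ∧
      @dis X t ≤ Cardinal.lift.{1} (Order.succ lam) ∧
      Order.succ lam < κ ∧
      Cardinal.lift.{1} κ ≤ @Delta X t := by
  classical
  have hκ0 : Cardinal.lift.{1} κ ≠ 0 := by
    intro h
    have : κ = 0 := by
      have := Cardinal.lift_eq_zero.mp h
      exact this
    rw [this] at hlt
    exact absurd (lt_trans (lt_of_lt_of_le Cardinal.aleph0_pos h0) hlt) (lt_irrefl _)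
  haveI hKne : Nonempty ((Cardinal.lift.{1} κ).ord.ToType) := by
    apply Ordinal.nonempty_toType_iff.mpr
    intro h
    apply hκ0
    have := congrArg Ordinal.card h
    simpa [Cardinal.card_ord] using this
  set K : Type 1 := (Cardinal.lift.{1} κ).ord.ToType with hK
  have hsucc : Order.succ lam < κ := by
    have h1 : Order.succ lam ≤ κ := Order.succ_le_of_lt hlt
    rcases lt_or_eq_of_le h1 with h2 | h2
    · exact h2
    · exfalso
      have hreg : (Order.succ lam).IsRegular := Cardinal.isRegular_succ h0
      rw [← h2] at hcf
      rw [hreg.cof_eq] at hcf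
      exact absurd (lt_of_lt_of_le (Order.lt_succ lam) hcf) (lt_irrefl _)
  refine ⟨XX K, inferInstance, topX, rfl, baireX, ⟨NB K, NB_basis, NB_chain⟩,
    paracompact_subset, ?_, hsucc, ?_⟩
  · -- dis bound
    have hmem : #(Set.range (fun δ : I => DD K δ)) ∈
        {c : Cardinal | ∃ 𝒟 : Set (Set (XX K)), #𝒟 = c ∧ (∀ D ∈ 𝒟, IsDiscreteSubset D) ∧
          ⋃₀ 𝒟 = Set.univ} := by
      refine ⟨Set.range (fun δ : I => DD K δ), rfl, ?_, ?_⟩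
      · rintro D ⟨δ, rfl⟩
        intro f hf
        exact DD_discrete δ f hf
      · apply Set.eq_univ_of_forall
        intro x
        exact ⟨DD K (ms x), ⟨ms x, rfl⟩, rfl⟩
    have h1 : dis (XX K) ≤ #(Set.range (fun δ : I => DD K δ)) := csInf_le' hmem
    refine le_trans h1 (le_trans Cardinal.mk_range_le ?_)
    have h2 : #I = Cardinal.aleph 1 := by
      rw [Cardinal.mk_toType, Cardinal.card_ord]
    rw [h2]
    have h3 : (Cardinal.aleph 1 : Cardinal.{1}) = Order.succ (Cardinal.aleph0 : Cardinal.{1}) :=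
      (Cardinal.succ_aleph0).symm
    rw [h3, Cardinal.lift_succ]
    apply Order.succ_le_succ
    rw [← Cardinal.lift_aleph0.{1, 0}]
    exact Cardinal.lift_le.mpr h0
  · -- Delta bound
    apply le_csInf
    · refine ⟨#(Set.univ : Set (XX K)), Set.univ, isOpen_univ, ?_, rfl⟩
      exact Set.univ_nonempty
    · rintro c ⟨W, hWo, hWne, rfl⟩
      obtain ⟨φ, hinj, hmem⟩ := inj_into_open hWo hWne
      have h1 : #K ≤ #W := by
        have hinj2 : Function.Injective (fun k => (⟨φ k, hmem k⟩ : ↥W)) := by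
          intro a b hab
          exact hinj (congrArg Subtype.val hab)
        exact Cardinal.mk_le_of_injective hinj2
      rw [Cardinal.mk_toType, Cardinal.card_ord] at h1
      exact h1
end

section
/- Every non-archimedean Hausdorff space is hereditarily paracompact. -/
open Set TopologicalSpace

private lemma min_congr' {α : Type*} {r : α → α → Prop} (wf : WellFounded r)
    {s t : Set α} (h : s = t) (hs : s.Nonempty) (ht : t.Nonempty) :
    wf.min s hs = wf.min t ht := by subst h; rfl

/-- In a T2 space with a disjoint-or-nested basis, every basic set is closed. -/
private lemma basics_closed {Y : Type*} [TopologicalSpace Y] [T2Space Y]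
    (Bas : Set (Set Y)) (hB : IsTopologicalBasis Bas)
    (hcmp : ∀ U ∈ Bas, ∀ V ∈ Bas, U ∩ V = ∅ ∨ U ⊆ V ∨ V ⊆ U)
    {B : Set Y} (hBmem : B ∈ Bas) : IsClosed B := by
  rcases eq_empty_or_nonempty B with rfl | ⟨x, hx⟩
  · exact isClosed_empty
  · rw [← isOpen_compl_iff, isOpen_iff_forall_mem_open]
    intro z hz
    obtain ⟨O1, O2, hO1, hO2, hxO1, hzO2, hdisj⟩ :=
      t2_separation (show x ≠ z from fun h => hz (h ▸ hx))
    obtain ⟨F, hF, hzF, hFsub⟩ := hB.exists_subset_of_mem_open hzO2 hO2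
    refine ⟨F, ?_, hB.isOpen hF, hzF⟩
    rcases hcmp F hF B hBmem with h | h | h
    · intro w hw hwB
      exact (eq_empty_iff_forall_notMem.1 h w) ⟨hw, hwB⟩
    · intro w hw hwB
      exact hz (h hzF)
    · exact absurd (hdisj.le_bot ⟨hxO1, hFsub (h hx)⟩) (notMem_empty x)

/-- Chain avoidance: if `𝒞` is a chain of basic sets none containing `z`, then
some open neighbourhood of `z` inside the basic set `A ∋ z` misses all of `𝒞`. -/
private lemma chain_avoid {Y : Type*} [TopologicalSpace Y] [T2Space Y]
    (Bas : Set (Set Y)) (hB : IsTopologicalBasis Bas)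
    (hcmp : ∀ U ∈ Bas, ∀ V ∈ Bas, U ∩ V = ∅ ∨ U ⊆ V ∨ V ⊆ U)
    {A : Set Y} (hA : A ∈ Bas) {z : Y} (hz : z ∈ A)
    (C : Set (Set Y)) (hCB : ∀ B ∈ C, B ∈ Bas) (hCz : ∀ B ∈ C, z ∉ B)
    (hchain : ∀ B ∈ C, ∀ B' ∈ C, B ⊆ B' ∨ B' ⊆ B) :
    ∃ W, IsOpen W ∧ z ∈ W ∧ W ⊆ A ∧ ∀ B ∈ C, W ∩ B = ∅ := by
  by_cases hcase : ∃ F ∈ Bas, z ∈ F ∧ F ⊆ A ∧ ∃ M, (M ∈ C ∨ M = ∅) ∧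
      ∀ B ∈ C, B ⊆ F → B ⊆ M
  · obtain ⟨F, hF, hzF, hFA, M, hM, hMbound⟩ := hcase
    have hMclosed : IsClosed M := by
      rcases hM with hM | rfl
      · exact basics_closed Bas hB hcmp (hCB M hM)
      · exact isClosed_empty
    have hzM : z ∉ M := by
      rcases hM with hM | rfl
      · exact hCz M hM
      · exact notMem_empty z
    refine ⟨F \ M, (hB.isOpen hF).sdiff hMclosed, ⟨hzF, hzM⟩, fun w hw => hFA hw.1, ?_⟩
    intro B hBC
    rw [eq_empty_iff_forall_notMem]
    rintro w ⟨⟨hwF, hwM⟩, hwB⟩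
    rcases hcmp F hF B (hCB B hBC) with h | h | h
    · exact (eq_empty_iff_forall_notMem.1 h w) ⟨hwF, hwB⟩
    · exact hCz B hBC (h hzF)
    · exact hwM (hMbound B hBC h hwB)
  · exfalso
    push_neg at hcase
    have hY : ∀ F ∈ Bas, z ∈ F → F ⊆ A → ∀ B1 ∈ C, B1 ⊆ F := by
      intro F hF hzF hFA B1 hB1
      obtain ⟨B, hBC, hBF, hBnM⟩ := hcase F hF hzF hFA B1 (Or.inl hB1)
      rcases hchain B hBC B1 hB1 with h | h
      · exact absurd h hBnM
      · exact h.trans hBF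
    have hempty : ∀ B1 ∈ C, B1 = ∅ := by
      intro B1 hB1
      rw [eq_empty_iff_forall_notMem]
      intro y hy
      by_cases hyz : y = z
      · exact hCz B1 hB1 (hyz ▸ hy)
      · obtain ⟨U, V, hU, hV, hzU, hyV, hdisj⟩ :=
          t2_separation (show z ≠ y from fun h => hyz h.symm)
        obtain ⟨F, hF, hzF, hFsub⟩ := hB.exists_subset_of_mem_open
          (show z ∈ U ∩ A from ⟨hzU, hz⟩) (hU.inter (hB.isOpen hA))
        have hsub := hY F hF hzF (fun w hw => (hFsub hw).2) B1 hB1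
        exact absurd (hdisj.le_bot ⟨(hFsub (hsub hy)).1, hyV⟩) (notMem_empty y)
    obtain ⟨B, hBC, -, hBne⟩ := hcase A hA hz (subset_refl A) ∅ (Or.inr rfl)
    exact hBne ((hempty B hBC) ▸ subset_refl B)

/-- Key construction: a disjoint open refinement of any covering family `𝒟` of basic sets. -/
private lemma key_refinement {Y : Type*} [TopologicalSpace Y] [T2Space Y]
    (Bas : Set (Set Y)) (hB : IsTopologicalBasis Bas)
    (hcmp : ∀ U ∈ Bas, ∀ V ∈ Bas, U ∩ V = ∅ ∨ U ⊆ V ∨ V ⊆ U)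
    (𝒟 : Set (Set Y)) (h𝒟B : ∀ B ∈ 𝒟, B ∈ Bas)
    (hcov : ∀ z : Y, ∃ B ∈ 𝒟, z ∈ B) :
    ∃ p : Y → Set Y, (∀ z, z ∈ p z) ∧ (∀ z v, v ∈ p z → p v = p z) ∧
      (∀ z, IsOpen (p z)) ∧ (∀ z, ∃ B ∈ 𝒟, p z ⊆ B) := by
  classical
  have wfX : WellFounded (WellOrderingRel : Y → Y → Prop) := IsWellFounded.wf
  have wfS : WellFounded (WellOrderingRel : Set Y → Set Y → Prop) := IsWellFounded.wf
  set D : Y → Set (Set Y) := fun x => {B | B ∈ 𝒟 ∧ x ∈ B} with hDdef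
  set V : Y → Set Y := fun x => ⋃₀ D x with hVdef
  have hVself : ∀ z, z ∈ V z := by
    intro z
    obtain ⟨B, hB𝒟, hzB⟩ := hcov z
    exact ⟨B, ⟨hB𝒟, hzB⟩, hzB⟩
  have hsubV : ∀ (x : Y) {B}, B ∈ 𝒟 → x ∈ B → B ⊆ V x :=
    fun x B hBD hx => subset_sUnion_of_mem ⟨hBD, hx⟩
  have hVsub : ∀ x v, v ∈ V x → V v ⊆ V x := by
    intro x v hv
    obtain ⟨B, ⟨hBD, hxB⟩, hvB⟩ := hv
    rintro w ⟨B', ⟨hB'D, hvB'⟩, hwB'⟩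
    rcases hcmp B' (h𝒟B _ hB'D) B (h𝒟B _ hBD) with h | h | h
    · exact absurd ((eq_empty_iff_forall_notMem.1 h) v) (fun hn => hn ⟨hvB', hvB⟩)
    · exact hsubV x hBD hxB (h hwB')
    · exact hsubV x hB'D (h hxB) hwB'
  have hVeq : ∀ x v, v ∈ V x → V v = V x := by
    intro x v hv
    refine subset_antisymm (hVsub x v hv) (hVsub v x ?_)
    obtain ⟨B, ⟨hBD, hxB⟩, hvB⟩ := hv
    exact hsubV v hBD hvB hxB
  set r : Y → Y := fun z => wfX.min (V z) ⟨z, hVself z⟩ with hrdef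
  have hrcongr : ∀ {x z : Y}, V x = V z → r x = r z := by
    intro x z h
    simp only [hrdef]
    exact min_congr' wfX h _ _
  have hrmem : ∀ z, r z ∈ V z := fun z => wfX.min_mem _ _
  set Cand : Y → Set (Set Y) := fun z => {B | B ∈ 𝒟 ∧ r z ∈ B ∧ z ∈ B} with hCanddef
  have hCandne : ∀ z, (Cand z).Nonempty := by
    intro z
    have hzV : z ∈ V (r z) := (hVeq z (r z) (hrmem z)).symm ▸ hVself z
    obtain ⟨B, ⟨hBD, hrB⟩, hzB⟩ := hzV
    exact ⟨B, hBD, hrB, hzB⟩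
  set Bsel : Y → Set Y := fun z => wfS.min (Cand z) (hCandne z) with hBseldef
  have hBselmem : ∀ z, Bsel z ∈ Cand z := fun z => wfS.min_mem _ _
  set Pred : Y → Set (Set Y) :=
    fun z => {B | B ∈ 𝒟 ∧ (∃ x, r x ∈ B) ∧ WellOrderingRel B (Bsel z)} with hPreddef
  set p : Y → Set Y := fun z => Bsel z \ ⋃₀ Pred z with hpdef
  have hkey : ∀ z x B, B ∈ 𝒟 → r x ∈ B → ∀ v, v ∈ B → v ∈ V z → r z ∈ B := by
    intro z x B hBD hrxB v hvB hvV
    have h1 : V v = V z := hVeq z v hvV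
    have h2 : r x ∈ V v := hsubV v hBD hvB hrxB
    have h3 : V (r x) = V v := hVeq v (r x) h2
    have h4 : V (r x) = V x := hVeq x (r x) (hrmem x)
    have h5 : r x = r z := hrcongr (by rw [← h4, h3, h1])
    exact h5 ▸ hrxB
  have hznotpred : ∀ z, ∀ B ∈ Pred z, z ∉ B := by
    intro z B hBP hzB
    obtain ⟨hBD, ⟨x, hrxB⟩, hlt⟩ := hBP
    have hrzB : r z ∈ B := hkey z x B hBD hrxB z hzB (hVself z)
    exact wfS.not_lt_min (Cand z) ⟨hBD, hrzB, hzB⟩ hlt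
  have hpz : ∀ z, z ∈ p z := by
    intro z
    refine ⟨(hBselmem z).2.2, ?_⟩
    rintro ⟨B, hBP, hzB⟩
    exact hznotpred z B hBP hzB
  have hBseleq : ∀ z v, v ∈ p z → Bsel v = Bsel z := by
    intro z v hv
    obtain ⟨hvB, hvnot⟩ := hv
    have hsel := hBselmem z
    have hvV : v ∈ V z := hsubV z hsel.1 hsel.2.2 hvB
    have hrv : r v = r z := hrcongr (hVeq z v hvV)
    have hCandv : Bsel z ∈ Cand v := ⟨hsel.1, by rw [hrv]; exact hsel.2.1, hvB⟩
    have h1 : ¬ WellOrderingRel (Bsel z) (Bsel v) :=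
      wfS.not_lt_min (Cand v) hCandv
    have h2 : ¬ WellOrderingRel (Bsel v) (Bsel z) := by
      intro hlt
      have hmem := hBselmem v
      exact hvnot ⟨Bsel v, ⟨hmem.1, ⟨v, hmem.2.1⟩, hlt⟩, hmem.2.2⟩
    rcases trichotomous_of (@WellOrderingRel (Set Y)) (Bsel v) (Bsel z)
      with h | h | h
    · exact absurd h h2
    · exact h
    · exact absurd h h1
  have hpeq : ∀ z v, v ∈ p z → p v = p z := by
    intro z v hv
    have heq := hBseleq z v hv
    simp only [hpdef, hPreddef, heq]
  have hWex : ∀ z, ∃ W, IsOpen W ∧ z ∈ W ∧ W ⊆ p z := by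
    intro z
    set C : Set (Set Y) := {B | B ∈ Pred z ∧ (B ∩ Bsel z).Nonempty} with hCdef
    have hselC := hBselmem z
    have hCr : ∀ B ∈ C, r z ∈ B := by
      rintro B ⟨⟨hBD, ⟨x, hrxB⟩, hlt⟩, ⟨v, hvB, hvsel⟩⟩
      exact hkey z x B hBD hrxB v hvB (hsubV z hselC.1 hselC.2.2 hvsel)
    have hCz : ∀ B ∈ C, z ∉ B := fun B hBC => hznotpred z B hBC.1
    have hchain : ∀ B ∈ C, ∀ B' ∈ C, B ⊆ B' ∨ B' ⊆ B := by
      intro B hBC B' hB'C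
      rcases hcmp B (h𝒟B _ hBC.1.1) B' (h𝒟B _ hB'C.1.1) with h | h | h
      · exact absurd ((eq_empty_iff_forall_notMem.1 h) (r z))
          (fun hn => hn ⟨hCr B hBC, hCr B' hB'C⟩)
      · exact Or.inl h
      · exact Or.inr h
    obtain ⟨W, hWopen, hzW, hWA, hWdisj⟩ := chain_avoid Bas hB hcmp
      (h𝒟B _ hselC.1) hselC.2.2 C (fun B hBC => h𝒟B _ hBC.1.1) hCz hchain
    refine ⟨W, hWopen, hzW, ?_⟩
    intro w hw
    refine ⟨hWA hw, ?_⟩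
    rintro ⟨B, hBP, hwB⟩
    have hBC : B ∈ C := ⟨hBP, ⟨w, hwB, hWA hw⟩⟩
    exact (eq_empty_iff_forall_notMem.1 (hWdisj B hBC) w) ⟨hw, hwB⟩
  have hopen : ∀ z, IsOpen (p z) := by
    intro z
    rw [isOpen_iff_forall_mem_open]
    intro v hv
    obtain ⟨W, hWopen, hvW, hWp⟩ := hWex v
    exact ⟨W, hWp.trans (hpeq z v hv).le, hWopen, hvW⟩
  exact ⟨p, hpz, hpeq, hopen, fun z => ⟨Bsel z, (hBselmem z).1, diff_subset⟩⟩

/-- A non-archimedean Hausdorff space is paracompact. -/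
private lemma nonarch_paracompact {Y : Type*} [TopologicalSpace Y] [T2Space Y]
    (Bas : Set (Set Y)) (hB : IsTopologicalBasis Bas)
    (hcmp : ∀ U ∈ Bas, ∀ V ∈ Bas, U ∩ V = ∅ ∨ U ⊆ V ∨ V ⊆ U) :
    ParacompactSpace Y := by
  constructor
  intro ι so ho hcov
  classical
  set 𝒟 : Set (Set Y) := {B | B ∈ Bas ∧ ∃ a, B ⊆ so a} with h𝒟def
  have hDcov : ∀ z : Y, ∃ B ∈ 𝒟, z ∈ B := by
    intro z
    have hz : z ∈ ⋃ a, so a := hcov ▸ mem_univ z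
    obtain ⟨a, haz⟩ := mem_iUnion.1 hz
    obtain ⟨B, hBmem, hzB, hBsub⟩ := hB.exists_subset_of_mem_open haz (ho a)
    exact ⟨B, ⟨hBmem, a, hBsub⟩, hzB⟩
  obtain ⟨p, hmem, hconst, hopen, hsub⟩ :=
    key_refinement Bas hB hcmp 𝒟 (fun B h => h.1) hDcov
  refine ⟨↥(range p), Subtype.val, ?_, ?_, ?_, ?_⟩
  · rintro ⟨_, w, rfl⟩
    exact hopen w
  · apply eq_univ_of_forall
    intro z
    exact mem_iUnion.2 ⟨⟨p z, z, rfl⟩, hmem z⟩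
  · intro z
    refine ⟨p z, (hopen z).mem_nhds (hmem z), ?_⟩
    apply Set.Finite.subset (finite_singleton (⟨p z, z, rfl⟩ : ↥(range p)))
    rintro ⟨_, w, rfl⟩ hne
    obtain ⟨v, hv1, hv2⟩ := hne
    have h1 := hconst w v hv1
    have h2 := hconst z v hv2
    simp only [mem_singleton_iff, Subtype.mk.injEq]
    apply Subtype.ext
    show p w = p z
    rw [← h1, h2]
  · rintro ⟨_, w, rfl⟩
    obtain ⟨B, hBD, hpB⟩ := hsub w
    obtain ⟨a, hBa⟩ := hBD.2
    exact ⟨a, hpB.trans hBa⟩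

/-- Every non-archimedean Hausdorff space (one with a base any two of whose members are
disjoint or comparable) is hereditarily paracompact. -/
theorem statement17 (X : Type*) [TopologicalSpace X] [T2Space X]
    (hna : ∃ B : Set (Set X), TopologicalSpace.IsTopologicalBasis B ∧
      ∀ U ∈ B, ∀ V ∈ B, U ∩ V = ∅ ∨ U ⊆ V ∨ V ⊆ U) :
    ∀ s : Set X, ParacompactSpace s := by
  obtain ⟨Bas, hB, hcmp⟩ := hna
  intro s
  have hB' : IsTopologicalBasis
      (Set.preimage (Subtype.val : s → X) '' Bas) :=
    isTopologicalBasis_subtype hB (· ∈ s)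
  apply nonarch_paracompact _ hB'
  rintro U' ⟨U, hU, rfl⟩ V' ⟨V, hV, rfl⟩
  rcases hcmp U hU V hV with h | h | h
  · left
    rw [← preimage_inter, h, preimage_empty]
  · right; left
    exact preimage_mono h
  · right; right
    exact preimage_mono h
end
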